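/- arXiv:2604.27160 — 8 statements merged into one kernel-verified Lean document; each statement's English description precedes it below -/
import Mathlib

section
/- Let C > 0 and let γ : 𝒰 → [0,∞) satisfy Σ_{v ∈ 𝒰} C^{2|v|} γ_v < ∞. Define γ↑ by γ↑_u := Σ_{v ∈ 𝒰, u ⊆ v} C^{2|v|} γ_v. Then for all u, v ∈ 𝒰 one has (Δ_v γ↑)_u = Σ_{w ∈ 𝒰, u ⊆ w, w ∩ v = ∅} C^{2|w|} γ_w. In particular γ↑ is completely monotone, and γ↑_u tends to 0 along the net of finite subsets directed by u ≤ v :⇔ max u ≤ max v. -/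
open Finset Filter Topology

/-- The difference operator `Δ_v` on families indexed by finite subsets of `ℕ`:
`(Δ_v γ)_u := Σ_{w ⊆ v} (−1)^{|w|} γ_{u ∪ w}`. -/
noncomputable def Δ (v : Finset ℕ) (γ : Finset ℕ → ℝ) (u : Finset ℕ) : ℝ :=
  ∑ w ∈ v.powerset, (-1 : ℝ) ^ w.card * γ (u ∪ w)

private lemma alt_sum_real (x : Finset ℕ) :
    (∑ m ∈ x.powerset, (-1 : ℝ) ^ m.card) = if x = ∅ then 1 else 0 := by
  have := Finset.sum_powerset_neg_one_pow_card (x := x)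
  have h : ((∑ m ∈ x.powerset, (-1 : ℤ) ^ m.card : ℤ) : ℝ)
      = ∑ m ∈ x.powerset, (-1 : ℝ) ^ m.card := by push_cast; ring_nf
  rw [← h, this]
  split <;> simp

theorem stmt5 (C : ℝ) (hC : 0 < C) (γ : Finset ℕ → ℝ) (hnn : ∀ u, 0 ≤ γ u)
    (hsum : Summable fun v : Finset ℕ => C ^ (2 * v.card) * γ v)
    (γup : Finset ℕ → ℝ)
    (hγup : ∀ u, γup u = ∑' v : Finset ℕ, if u ⊆ v then C ^ (2 * v.card) * γ v else 0) :
    (∀ u v : Finset ℕ,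
      Δ v γup u = ∑' w : Finset ℕ, if u ⊆ w ∧ w ∩ v = ∅ then C ^ (2 * w.card) * γ w else 0) ∧
    (∀ a b : Finset ℕ, 0 ≤ Δ a γup b) ∧
    (∀ ε > (0 : ℝ), ∃ r : ℕ, ∀ u : Finset ℕ, r ≤ u.sup id → γup u < ε) := by
  set f : Finset ℕ → ℝ := fun v => C ^ (2 * v.card) * γ v with hf
  have hfnn : ∀ v, 0 ≤ f v := fun v => mul_nonneg (pow_nonneg hC.le _) (hnn v)
  have hsummand : ∀ (t : Finset ℕ), Summable (fun s : Finset ℕ => if t ⊆ s then f s else 0) := by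
    intro t
    refine Summable.of_nonneg_of_le (fun s => ?_) (fun s => ?_) hsum <;>
      · by_cases h : t ⊆ s <;> simp [h, hfnn]
  have key : ∀ u v : Finset ℕ,
      Δ v γup u = ∑' w : Finset ℕ, if u ⊆ w ∧ w ∩ v = ∅ then f w else 0 := by
    intro u v
    have hΔ : Δ v γup u = ∑ w ∈ v.powerset,
        ∑' s : Finset ℕ, (-1 : ℝ) ^ w.card * (if u ∪ w ⊆ s then f s else 0) := by
      unfold Δ
      refine Finset.sum_congr rfl fun w _ => ?_
      rw [hγup (u ∪ w), ← tsum_mul_left]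
    rw [hΔ, ← Summable.tsum_finsetSum (fun w _ => (hsummand (u ∪ w)).mul_left _)]
    refine tsum_congr fun s => ?_
    by_cases hus : u ⊆ s
    · have hsub : ∀ w : Finset ℕ, (u ∪ w ⊆ s) ↔ w ⊆ s := by
        intro w; constructor
        · intro h; exact (Finset.union_subset_iff.mp h).2
        · intro h; exact Finset.union_subset hus h
      have : ∑ w ∈ v.powerset, (-1 : ℝ) ^ w.card * (if u ∪ w ⊆ s then f s else 0)
          = ∑ w ∈ v.powerset, (if w ⊆ s then (-1 : ℝ) ^ w.card * f s else 0) := by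
        refine Finset.sum_congr rfl fun w _ => ?_
        simp only [hsub w, mul_ite, mul_zero]
      rw [this, Finset.sum_ite, Finset.sum_const_zero, add_zero]
      have hfilter : v.powerset.filter (fun w => w ⊆ s) = (v ∩ s).powerset := by
        ext w
        simp only [Finset.mem_filter, Finset.mem_powerset]
        exact (Finset.subset_inter_iff).symm
      rw [hfilter, ← Finset.sum_mul, alt_sum_real]
      by_cases hvs : v ∩ s = ∅
      · have : s ∩ v = ∅ := by rwa [Finset.inter_comm]
        simp [hvs, hus, this]
      · have : ¬ (s ∩ v = ∅) := by rwa [Finset.inter_comm] at hvs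
        simp [hvs, hus, this]
    · have : ∀ w : Finset ℕ, ¬ (u ∪ w ⊆ s) := by
        intro w h; exact hus (Finset.union_subset_iff.mp h).1
      simp [this, hus]
  refine ⟨key, ?_, ?_⟩
  · intro a b
    rw [key b a]
    refine tsum_nonneg fun s => ?_
    split <;> simp [hfnn]
  · intro ε hε
    obtain ⟨T, hT⟩ : ∃ T : Finset (Finset ℕ),
        (∑' s : Finset ℕ, f s) - ε < ∑ s ∈ T, f s := by
      have h2 := hsum.hasSum
      rw [HasSum] at h2
      have : ∀ᶠ T : Finset (Finset ℕ) in atTop,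
          (∑' s : Finset ℕ, f s) - ε < ∑ s ∈ T, f s :=
        h2.eventually (eventually_gt_nhds (by linarith))
      exact this.exists
    refine ⟨(T.sup (fun s => s.sup id)) + 1, fun u hu => ?_⟩
    have hnotT : ∀ s : Finset ℕ, u ⊆ s → s ∉ T := by
      intro s hsub hsT
      have h1 : s.sup id ≤ T.sup (fun s => s.sup id) := Finset.le_sup hsT
      have h2 : u.sup id ≤ s.sup id := Finset.sup_mono hsub
      omega
    have hle : γup u ≤ ∑' s : Finset ℕ, Set.indicator (↑T)ᶜ f s := by
      rw [hγup u]
      refine Summable.tsum_le_tsum (fun s => ?_) (hsummand u) (hsum.indicator _)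
      by_cases h : u ⊆ s
      · have : s ∈ ((↑T)ᶜ : Set (Finset ℕ)) := hnotT s h
        simp [h, Set.indicator_of_mem this, hf]
      · simp only [h, if_false]
        exact Set.indicator_nonneg (fun x _ => hfnn x) s
    have heq : ∑' s : Finset ℕ, Set.indicator (↑T)ᶜ f s
        = ∑' s : ((↑T)ᶜ : Set (Finset ℕ)), f s := (_root_.tsum_subtype _ f).symm
    have hsplit := Summable.sum_add_tsum_compl (s := T) hsum
    have : ∑' s : ((↑T)ᶜ : Set (Finset ℕ)), f s < ε := by linarith
    calc γup u ≤ _ := hle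
      _ < ε := by rw [heq]; exact this
end

section
/- Let ρ : 𝒰 → ℝ be a family of real numbers indexed by the finite subsets of ℕ, let p, q ∈ ℕ with q ≤ p, and let u ⊆ [q]. Then Σ_{v : u ⊆ v ⊆ [q]} Σ_{w : v ⊆ w ⊆ [p]} (−1)^{|v|} ρ_w = (−1)^{|u|} Σ_{v ⊆ [p] ∖ [q]} ρ_{u ∪ v}. -/
open Finset

lemma pow_card_sum6 (x : Finset ℕ) :
    ∑ m ∈ x.powerset, (-1 : ℝ) ^ m.card = if x = ∅ then 1 else 0 := by
  have h := congrArg (fun z : ℤ => (z : ℝ))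
    (Finset.sum_powerset_neg_one_pow_card (x := x))
  push_cast at h
  simpa [apply_ite (fun z : ℤ => (z : ℝ))] using h

lemma alt_sum6 (u A : Finset ℕ) (hu : u ⊆ A) :
    ∑ v ∈ A.powerset.filter (fun v => u ⊆ v), (-1 : ℝ) ^ v.card
      = if A = u then (-1 : ℝ) ^ u.card else 0 := by
  have key : ∑ v ∈ A.powerset.filter (fun v => u ⊆ v), (-1 : ℝ) ^ v.card
      = ∑ t ∈ (A \ u).powerset, (-1 : ℝ) ^ (u ∪ t).card := by
    apply Finset.sum_nbij' (fun v => v \ u) (fun t => u ∪ t)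
    · intro v hv
      simp only [mem_filter, mem_powerset] at hv
      simp only [mem_powerset]
      exact sdiff_subset_sdiff hv.1 (subset_refl u)
    · intro t ht
      simp only [mem_powerset] at ht
      simp only [mem_filter, mem_powerset]
      exact ⟨union_subset hu (ht.trans sdiff_subset), subset_union_left⟩
    · intro v hv
      simp only [mem_filter, mem_powerset] at hv
      exact union_sdiff_of_subset hv.2
    · intro t ht
      simp only [mem_powerset] at ht
      have hd : Disjoint u t := Finset.disjoint_left.mpr
        fun a ha hat => (Finset.mem_sdiff.mp (ht hat)).2 ha
      rw [union_sdiff_cancel_left hd]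
    · intro v hv
      simp only [mem_filter, mem_powerset] at hv
      rw [union_sdiff_of_subset hv.2]
  rw [key]
  have hcong : ∀ t ∈ (A \ u).powerset, (-1 : ℝ) ^ (u ∪ t).card
      = (-1 : ℝ) ^ u.card * (-1 : ℝ) ^ t.card := by
    intro t ht
    simp only [mem_powerset] at ht
    have hd : Disjoint u t := Finset.disjoint_left.mpr
      fun a ha hat => (Finset.mem_sdiff.mp (ht hat)).2 ha
    rw [card_union_of_disjoint hd, pow_add]
  rw [Finset.sum_congr rfl hcong, ← Finset.mul_sum, pow_card_sum6]
  have he : A \ u = ∅ ↔ A = u := by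
    rw [sdiff_eq_empty_iff_subset]
    exact ⟨fun h => subset_antisymm h hu, fun h => h.le⟩
  simp only [he]
  split <;> simp

theorem stmt6 (ρ : Finset ℕ → ℝ) (p q : ℕ) (hqp : q ≤ p) (u : Finset ℕ)
    (hu : u ⊆ Finset.range q) :
    ∑ v ∈ (Finset.range q).powerset.filter (fun v => u ⊆ v),
      ∑ w ∈ (Finset.range p).powerset.filter (fun w => v ⊆ w),
        (-1 : ℝ) ^ v.card * ρ w
      = (-1 : ℝ) ^ u.card * ∑ v ∈ (Finset.range p \ Finset.range q).powerset, ρ (u ∪ v) := by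
  have hswap : ∑ v ∈ (Finset.range q).powerset.filter (fun v => u ⊆ v),
      ∑ w ∈ (Finset.range p).powerset.filter (fun w => v ⊆ w),
        (-1 : ℝ) ^ v.card * ρ w
      = ∑ w ∈ (Finset.range p).powerset.filter (fun w => u ⊆ w),
          ∑ v ∈ (w ∩ Finset.range q).powerset.filter (fun v => u ⊆ v),
            (-1 : ℝ) ^ v.card * ρ w := by
    apply Finset.sum_comm'
    intro v w
    simp only [mem_filter, mem_powerset, subset_inter_iff]
    constructor
    · rintro ⟨⟨hvq, huv⟩, hwp, hvw⟩
      exact ⟨⟨⟨hvw, hvq⟩, huv⟩, hwp, huv.trans hvw⟩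
    · rintro ⟨⟨⟨hvw, hvq⟩, huv⟩, hwp, _⟩
      exact ⟨⟨hvq, huv⟩, hwp, hvw⟩
  rw [hswap]
  have hinner : ∀ w ∈ (Finset.range p).powerset.filter (fun w => u ⊆ w),
      ∑ v ∈ (w ∩ Finset.range q).powerset.filter (fun v => u ⊆ v),
        (-1 : ℝ) ^ v.card * ρ w
      = (if w ∩ Finset.range q = u then (-1 : ℝ) ^ u.card * ρ w else 0) := by
    intro w hw
    simp only [mem_filter, mem_powerset] at hw
    rw [← Finset.sum_mul, alt_sum6 u (w ∩ Finset.range q) (subset_inter hw.2 hu)]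
    split <;> simp
  rw [Finset.sum_congr rfl hinner, ← Finset.sum_filter, Finset.mul_sum]
  apply Finset.sum_nbij' (fun w => w \ Finset.range q) (fun v => u ∪ v)
  · intro w hw
    simp only [mem_filter, mem_powerset] at hw
    simp only [mem_powerset]
    exact sdiff_subset_sdiff hw.1.1 (subset_refl _)
  · intro v hv
    simp only [mem_powerset] at hv
    have hvq : Disjoint v (Finset.range q) := Finset.disjoint_left.mpr
      fun a ha hq => (Finset.mem_sdiff.mp (hv ha)).2 hq
    simp only [mem_filter, mem_powerset]
    refine ⟨⟨union_subset (hu.trans (Finset.range_subset_range.mpr hqp))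
        (hv.trans sdiff_subset), subset_union_left⟩, ?_⟩
    rw [union_inter_distrib_right, (inter_eq_left).mpr hu,
      Finset.disjoint_iff_inter_eq_empty.mp hvq, union_empty]
  · intro w hw
    simp only [mem_filter, mem_powerset] at hw
    have hsplit : w ∩ Finset.range q ∪ w \ Finset.range q = w := by
      ext a; simp only [mem_union, mem_inter, mem_sdiff]; tauto
    conv_rhs => rw [← hsplit, hw.2]
  · intro v hv
    simp only [mem_powerset] at hv
    have hvq : Disjoint v (Finset.range q) := Finset.disjoint_left.mpr
      fun a ha hq => (Finset.mem_sdiff.mp (hv ha)).2 hq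
    rw [union_sdiff_distrib, Finset.sdiff_eq_empty_iff_subset.mpr hu,
      hvq.sdiff_eq_left, empty_union]
  · intro w hw
    simp only [mem_filter, mem_powerset] at hw
    congr 1
    have hsplit : w ∩ Finset.range q ∪ w \ Finset.range q = w := by
      ext a; simp only [mem_union, mem_inter, mem_sdiff]; tauto
    conv_lhs => rw [← hsplit, hw.2]
end

section
/- Let C > 0 and let γ : 𝒰 → [0,∞) satisfy Σ_{v ∈ 𝒰} C^{2|v|} γ_v < ∞. Define γ↑ by γ↑_u := Σ_{v ∈ 𝒰, u ⊆ v} C^{2|v|} γ_v. Then for every u ∈ 𝒰 the limit lim_{s → ∞} (Δ_{[s] ∖ u} γ↑)_u exists and C^{−2|u|} lim_{s → ∞} (Δ_{[s] ∖ u} γ↑)_u = γ_u. -/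
open Finset Filter Topology

theorem stmt8 (C : ℝ) (hC : 0 < C) (γ : Finset ℕ → ℝ) (hnn : ∀ u, 0 ≤ γ u)
    (hsum : Summable fun v : Finset ℕ => C ^ (2 * v.card) * γ v)
    (γup : Finset ℕ → ℝ)
    (hγup : ∀ u, γup u = ∑' v : Finset ℕ, if u ⊆ v then C ^ (2 * v.card) * γ v else 0)
    (u : Finset ℕ) :
    ∃ L : ℝ, Tendsto (fun s : ℕ => Δ (Finset.range s \ u) γup u) atTop (𝓝 L) ∧
      (C ^ (2 * u.card))⁻¹ * L = γ u := by
  classical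
  set g : Finset ℕ → ℝ := fun t => C ^ (2 * t.card) * γ t with hg
  have hgnn : ∀ t, 0 ≤ g t := fun t => mul_nonneg (pow_nonneg hC.le _) (hnn t)
  -- key identity
  have hkey : ∀ s : ℕ, Δ (Finset.range s \ u) γup u
      = ∑' t : Finset ℕ, if u ⊆ t ∧ (Finset.range s \ u) ∩ t = ∅ then g t else 0 := by
    intro s
    set V := Finset.range s \ u with hV
    have hsummable : ∀ w : Finset ℕ, Summable (fun t : Finset ℕ =>
        (-1:ℝ) ^ w.card * if u ∪ w ⊆ t then g t else 0) := by
      intro w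
      apply Summable.mul_left
      refine Summable.of_nonneg_of_le (fun t => ?_) (fun t => ?_) hsum
      · split_ifs with h; exacts [hgnn t, le_rfl]
      · split_ifs with h; exacts [le_rfl, hgnn t]
    have h1 : Δ V γup u = ∑ w ∈ V.powerset, ∑' t : Finset ℕ,
        (-1:ℝ) ^ w.card * if u ∪ w ⊆ t then g t else 0 := by
      unfold Δ
      refine Finset.sum_congr rfl fun w _ => ?_
      rw [hγup (u ∪ w), ← tsum_mul_left]
    rw [h1, ← Summable.tsum_finsetSum (fun w _ => hsummable w)]
    refine tsum_congr fun t => ?_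
    by_cases hut : u ⊆ t
    · have hcond : ∀ w : Finset ℕ, (u ∪ w ⊆ t) ↔ w ⊆ t := by
        intro w; rw [Finset.union_subset_iff]; exact ⟨fun h => h.2, fun h => ⟨hut, h⟩⟩
      have : ∑ w ∈ V.powerset, ((-1:ℝ) ^ w.card * if u ∪ w ⊆ t then g t else 0)
          = ∑ w ∈ (V ∩ t).powerset, (-1:ℝ) ^ w.card * g t := by
        rw [Finset.sum_congr rfl (fun w _ => by rw [if_congr (hcond w) rfl rfl])]
        rw [← Finset.sum_filter_add_sum_filter_not V.powerset (· ⊆ t)]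
        have hfil : V.powerset.filter (· ⊆ t) = (V ∩ t).powerset := by
          ext w
          simp only [Finset.mem_filter, Finset.mem_powerset, Finset.subset_inter_iff]
          try tauto
        rw [hfil]
        have hz : ∑ w ∈ V.powerset.filter (fun w => ¬ w ⊆ t),
            ((-1:ℝ) ^ w.card * if w ⊆ t then g t else 0) = 0 := by
          refine Finset.sum_eq_zero fun w hw => ?_
          rw [if_neg (Finset.mem_filter.1 hw).2, mul_zero]
        rw [hz, add_zero]
        refine Finset.sum_congr rfl fun w hw => ?_
        rw [if_pos (Finset.subset_inter_iff.1 (Finset.mem_powerset.1 hw)).2]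
      rw [this, ← Finset.sum_mul]
      have hpow : ∑ w ∈ (V ∩ t).powerset, (-1:ℝ) ^ w.card
          = if V ∩ t = ∅ then 1 else 0 := by
        have := Finset.sum_powerset_neg_one_pow_card (x := V ∩ t)
        have h2 : ((∑ m ∈ (V ∩ t).powerset, (-1:ℤ) ^ m.card : ℤ) : ℝ)
            = ∑ w ∈ (V ∩ t).powerset, (-1:ℝ) ^ w.card := by push_cast; ring_nf
        rw [← h2, this]
        split_ifs <;> simp
      rw [hpow]
      by_cases hVt : V ∩ t = ∅
      · rw [if_pos hVt, if_pos ⟨hut, hVt⟩, one_mul]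
      · rw [if_neg hVt, if_neg (fun h => hVt h.2), zero_mul]
    · rw [if_neg (fun h => hut h.1)]
      refine Finset.sum_eq_zero fun w _ => ?_
      rw [if_neg (fun h => hut (Finset.union_subset_iff.1 h).1), mul_zero]
  -- limit
  refine ⟨g u, ?_, ?_⟩
  · have := tendsto_tsum_of_dominated_convergence (𝓕 := atTop)
      (f := fun (s : ℕ) (t : Finset ℕ) =>
        if u ⊆ t ∧ (Finset.range s \ u) ∩ t = ∅ then g t else 0)
      (g := fun t => if t = u then g u else 0) (bound := g) hsum
      (fun t => ?_) ?_
    · have htsum : ∑' t : Finset ℕ, (if t = u then g u else 0) = g u := tsum_ite_eq u (fun _ => g u)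
      rw [htsum] at this
      refine Tendsto.congr (fun s => (hkey s).symm) this
    · show Tendsto (fun s : ℕ => if u ⊆ t ∧ (Finset.range s \ u) ∩ t = ∅ then g t else 0)
        atTop (𝓝 (if t = u then g u else 0))
      by_cases htu : t = u
      · subst htu
        have : ∀ s : ℕ, (if t ⊆ t ∧ (Finset.range s \ t) ∩ t = ∅ then g t else 0) = g t := by
          intro s
          rw [if_pos ⟨Finset.Subset.refl t, Finset.sdiff_inter_self _ _⟩]
        simp only [this, if_pos rfl]
        exact tendsto_const_nhds
      · rw [if_neg htu]
        by_cases hut : u ⊆ t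
        · obtain ⟨a, ha⟩ : (t \ u).Nonempty := by
            rw [Finset.sdiff_nonempty]
            exact fun h => htu (Finset.Subset.antisymm h hut)
          have : ∀ s : ℕ, a + 1 ≤ s →
              (if u ⊆ t ∧ (Finset.range s \ u) ∩ t = ∅ then g t else 0) = 0 := by
            intro s hs
            rw [if_neg]
            rintro ⟨-, h⟩
            have hmem : a ∈ (Finset.range s \ u) ∩ t := by
              rw [Finset.mem_inter, Finset.mem_sdiff, Finset.mem_range]
              have := Finset.mem_sdiff.1 ha
              exact ⟨⟨lt_of_lt_of_le (Nat.lt_succ_self a) hs, this.2⟩, this.1⟩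
            rw [h] at hmem
            exact absurd hmem (Finset.notMem_empty a)
          refine Tendsto.congr' ?_ tendsto_const_nhds
          filter_upwards [eventually_ge_atTop (a + 1)] with s hs
          exact (this s hs).symm
        · simp only [hut, false_and, if_false]
          exact tendsto_const_nhds
    · filter_upwards with s t
      rw [Real.norm_eq_abs, abs_of_nonneg (by split_ifs with h; exacts [hgnn t, le_rfl])]
      split_ifs with h; exacts [le_rfl, hgnn t]
  · have hCpow : (C : ℝ) ^ (2 * u.card) ≠ 0 := pow_ne_zero _ hC.ne'
    rw [hg]
    field_simp
end

section
/- Let C > 0 and let γ : 𝒰 → [0,∞) be completely monotone. For every u ∈ 𝒰 the sequence s ↦ (Δ_{[s] ∖ u} γ)_u is non-increasing in [0, γ_u], so the limit (T↓ γ)_u := C^{−2|u|} lim_{s → ∞} (Δ_{[s] ∖ u} γ)_u exists. Then: (i) Σ_{v ∈ 𝒰} C^{2|v|} (T↓ γ)_v < ∞; (ii) for every u ∈ 𝒰, Σ_{v ∈ 𝒰, u ⊆ v} C^{2|v|} (T↓ γ)_v = lim_{r → ∞} lim_{s → ∞} (Δ_{[s] ∖ [r]} γ)_u ≤ γ_u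 (in particular, both iterated limits exist). -/
open Finset Filter Topology

lemma delta_empty (γ : Finset ℕ → ℝ) (u : Finset ℕ) : Δ ∅ γ u = γ u := by
  simp [Δ]

lemma delta_insert {a : ℕ} {v : Finset ℕ} (ha : a ∉ v) (γ : Finset ℕ → ℝ) (u : Finset ℕ) :
    Δ (insert a v) γ u = Δ v γ u - Δ v γ (insert a u) := by
  unfold Δ
  rw [Finset.sum_powerset_insert ha]
  have h : ∀ w ∈ v.powerset, (-1:ℝ)^(insert a w).card * γ (u ∪ insert a w)
      = -((-1:ℝ)^w.card * γ (insert a u ∪ w)) := by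
    intro w hw
    have haw : a ∉ w := fun h => ha (Finset.mem_powerset.mp hw h)
    rw [Finset.card_insert_of_notMem haw]
    have huw : u ∪ insert a w = insert a u ∪ w := by
      ext x
      simp only [Finset.mem_insert, Finset.mem_union]
      tauto
    rw [huw]; ring
  rw [Finset.sum_congr rfl h, Finset.sum_neg_distrib]
  ring

lemma delta_union_le (γ : Finset ℕ → ℝ) (hcm : ∀ v u : Finset ℕ, 0 ≤ Δ v γ u)
    (u v w : Finset ℕ) : Δ (v ∪ w) γ u ≤ Δ v γ u := by
  induction w using Finset.induction_on with
  | empty => simp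
  | @insert a s ha ih =>
    by_cases hav : a ∈ v ∪ s
    · have : v ∪ insert a s = v ∪ s := by
        rw [Finset.union_insert, Finset.insert_eq_self.mpr hav]
      rw [this]; exact ih
    · have : v ∪ insert a s = insert a (v ∪ s) := by rw [Finset.union_insert]
      rw [this, delta_insert hav γ u]
      have := hcm (v ∪ s) (insert a u)
      linarith
    
lemma delta_mono (γ : Finset ℕ → ℝ) (hcm : ∀ v u : Finset ℕ, 0 ≤ Δ v γ u)
    {v v' : Finset ℕ} (h : v ⊆ v') (u : Finset ℕ) : Δ v' γ u ≤ Δ v γ u := by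
  have := delta_union_le γ hcm u v (v' \ v)
  rwa [Finset.union_sdiff_of_subset h] at this

lemma delta_le_gamma (γ : Finset ℕ → ℝ) (hcm : ∀ v u : Finset ℕ, 0 ≤ Δ v γ u)
    (v u : Finset ℕ) : Δ v γ u ≤ γ u := by
  have := delta_mono γ hcm (Finset.empty_subset v) u
  rwa [delta_empty] at this

lemma delta_expand (γ : Finset ℕ → ℝ) (u : Finset ℕ) :
    ∀ (t v : Finset ℕ), Disjoint t v →
    Δ v γ u = ∑ w ∈ t.powerset, Δ (v ∪ (t \ w)) γ (u ∪ w) := by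
  intro t
  induction t using Finset.induction_on with
  | empty => intro v _; simp
  | @insert a s ha ih =>
    intro v hdisj
    have hsv : Disjoint s v := hdisj.mono_left (Finset.subset_insert a s)
    have hav : a ∉ v := Finset.disjoint_left.mp hdisj (Finset.mem_insert_self a s)
    rw [Finset.sum_powerset_insert ha]
    have h1 : ∀ w ∈ s.powerset,
        Δ (v ∪ (insert a s \ w)) γ (u ∪ w)
          = Δ (v ∪ (s \ w)) γ (u ∪ w) - Δ (v ∪ (s \ w)) γ (insert a (u ∪ w)) := by
      intro w hw
      have haw : a ∉ w := fun h => ha (Finset.mem_powerset.mp hw h)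
      have h2 : insert a s \ w = insert a (s \ w) := by
        rw [Finset.insert_sdiff_of_notMem _ haw]
      have h3 : v ∪ insert a (s \ w) = insert a (v ∪ (s \ w)) := by
        rw [Finset.union_insert]
      have h4 : a ∉ v ∪ (s \ w) := by
        simp only [Finset.mem_union, Finset.mem_sdiff]
        push_neg
        exact ⟨hav, fun h => absurd h ha⟩
      rw [h2, h3, delta_insert h4]
    have h5 : ∀ w ∈ s.powerset,
        Δ (v ∪ (insert a s \ insert a w)) γ (u ∪ insert a w)
          = Δ (v ∪ (s \ w)) γ (insert a (u ∪ w)) := by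
      intro w hw
      have h6 : insert a s \ insert a w = s \ w := by
        ext x
        simp only [Finset.mem_sdiff, Finset.mem_insert]
        constructor
        · rintro ⟨h | h, h'⟩
          · exact absurd (Or.inl h) h'
          · push_neg at h'
            exact ⟨h, h'.2⟩
        · rintro ⟨h, h'⟩
          refine ⟨Or.inr h, ?_⟩
          rintro (rfl | hx)
          · exact ha h
          · exact h' hx
      have h7 : u ∪ insert a w = insert a (u ∪ w) := by
        rw [Finset.union_insert]
      rw [h6, h7]
    rw [Finset.sum_congr rfl h1, Finset.sum_congr rfl h5, Finset.sum_sub_distrib]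
    rw [sub_add_cancel]
    exact ih v hsv

theorem stmt9 (C : ℝ) (hC : 0 < C) (γ : Finset ℕ → ℝ) (hnn : ∀ u, 0 ≤ γ u)
    (hcm : ∀ v u : Finset ℕ, 0 ≤ Δ v γ u) :
    (∀ u : Finset ℕ,
      (∀ s t : ℕ, s ≤ t → Δ (Finset.range t \ u) γ u ≤ Δ (Finset.range s \ u) γ u) ∧
      ∀ s : ℕ, 0 ≤ Δ (Finset.range s \ u) γ u ∧ Δ (Finset.range s \ u) γ u ≤ γ u) ∧
    ∀ Td : Finset ℕ → ℝ,
      (∀ u : Finset ℕ, Tendsto (fun s : ℕ => Δ (Finset.range s \ u) γ u) atTop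
        (𝓝 (C ^ (2 * u.card) * Td u))) →
      (Summable fun v : Finset ℕ => C ^ (2 * v.card) * Td v) ∧
      ∀ u : Finset ℕ, ∃ g : ℕ → ℝ,
        (∀ r : ℕ, Tendsto (fun s : ℕ => Δ (Finset.range s \ Finset.range r) γ u) atTop
          (𝓝 (g r))) ∧
        Tendsto g atTop
          (𝓝 (∑' v : Finset ℕ, if u ⊆ v then C ^ (2 * v.card) * Td v else 0)) ∧
        (∑' v : Finset ℕ, if u ⊆ v then C ^ (2 * v.card) * Td v else 0) ≤ γ u := by
  constructor
  · intro u
    constructor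
    · intro s t hst
      exact delta_mono γ hcm (Finset.sdiff_subset_sdiff
        (Finset.range_subset_range.mpr hst) (Finset.Subset.refl u)) u
    · intro s
      exact ⟨hcm _ _, delta_le_gamma γ hcm _ _⟩
  intro Td hTd
  set F : Finset ℕ → ℝ := fun v => C ^ (2 * v.card) * Td v with hF
  -- nonnegativity of F
  have hF0 : ∀ v, 0 ≤ F v := fun v => ge_of_tendsto' (hTd v) (fun s => hcm _ _)
  -- key identity for limits
  have hkey : ∀ (u : Finset ℕ) (r : ℕ), u ⊆ Finset.range r →
      Tendsto (fun s : ℕ => Δ (Finset.range s \ Finset.range r) γ u) atTop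
        (𝓝 (∑ w ∈ (Finset.range r \ u).powerset, F (u ∪ w))) := by
    intro u r hur
    have hlim : Tendsto (fun s : ℕ =>
        ∑ w ∈ (Finset.range r \ u).powerset, Δ (Finset.range s \ (u ∪ w)) γ (u ∪ w)) atTop
        (𝓝 (∑ w ∈ (Finset.range r \ u).powerset, F (u ∪ w))) := by
      exact tendsto_finset_sum _ (fun w _ => hTd (u ∪ w))
    refine hlim.congr' ?_
    filter_upwards [eventually_ge_atTop r] with s hrs
    have hdisj : Disjoint (Finset.range r \ u) (Finset.range s \ Finset.range r) := by
      rw [Finset.disjoint_left]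
      intro x hx hx'
      exact (Finset.mem_sdiff.mp hx').2 (Finset.mem_sdiff.mp hx).1
    rw [delta_expand γ u (Finset.range r \ u) (Finset.range s \ Finset.range r) hdisj]
    refine Finset.sum_congr rfl ?_
    intro w hw
    have hw' : w ⊆ Finset.range r \ u := Finset.mem_powerset.mp hw
    have hset : (Finset.range s \ Finset.range r) ∪ ((Finset.range r \ u) \ w)
        = Finset.range s \ (u ∪ w) := by
      ext x
      simp only [Finset.mem_union, Finset.mem_sdiff, Finset.mem_range, not_or]
      have h1 : x ∈ u → x < r := fun h => Finset.mem_range.mp (hur h)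
      have h2 : x ∈ w → x < r ∧ x ∉ u := by
        intro h
        have := Finset.mem_sdiff.mp (hw' h)
        exact ⟨Finset.mem_range.mp this.1, this.2⟩
      constructor
      · rintro (⟨hxs, hxr⟩ | ⟨⟨hxr, hxu⟩, hxw⟩)
        · exact ⟨hxs, fun h => hxr (h1 h), fun h => hxr (h2 h).1⟩
        · exact ⟨lt_of_lt_of_le hxr hrs, hxu, hxw⟩
      · rintro ⟨hxs, hxu, hxw⟩
        by_cases hxr : x < r
        · exact Or.inr ⟨⟨hxr, hxu⟩, hxw⟩
        · exact Or.inl ⟨hxs, hxr⟩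
    rw [hset]
  -- bound on the partial sums
  have hbound : ∀ (u : Finset ℕ) (r : ℕ), u ⊆ Finset.range r →
      ∑ w ∈ (Finset.range r \ u).powerset, F (u ∪ w) ≤ γ u := by
    intro u r hur
    exact le_of_tendsto (hkey u r hur) (Eventually.of_forall
      (fun s => delta_le_gamma γ hcm _ _))
  -- reindexing lemma
  have hreindex : ∀ (u : Finset ℕ) (r : ℕ), u ⊆ Finset.range r →
      ∑ w ∈ (Finset.range r \ u).powerset, F (u ∪ w)
        = ∑ v ∈ (Finset.range r).powerset, (if u ⊆ v then F v else 0) := by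
    intro u r hur
    rw [← Finset.sum_filter]
    refine Finset.sum_nbij' (fun w => u ∪ w) (fun v => v \ u) ?_ ?_ ?_ ?_ ?_
    · intro w hw
      have hw' : w ⊆ Finset.range r \ u := Finset.mem_powerset.mp hw
      simp only [Finset.mem_filter, Finset.mem_powerset]
      exact ⟨Finset.union_subset hur (hw'.trans (Finset.sdiff_subset)),
        Finset.subset_union_left⟩
    · intro v hv
      simp only [Finset.mem_filter, Finset.mem_powerset] at hv ⊢
      exact Finset.sdiff_subset_sdiff hv.1 (Finset.Subset.refl u)
    · intro w hw
      have hw' : w ⊆ Finset.range r \ u := Finset.mem_powerset.mp hw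
      have : Disjoint u w := by
        rw [Finset.disjoint_right]
        intro x hx
        exact (Finset.mem_sdiff.mp (hw' hx)).2
      show (u ∪ w) \ u = w
      rw [Finset.union_sdiff_cancel_left this]
    · intro v hv
      simp only [Finset.mem_filter] at hv
      show u ∪ (v \ u) = v
      exact Finset.union_sdiff_of_subset hv.2
    · intro w hw
      rfl
  -- summability of F
  have hsumF : Summable F := by
    refine summable_of_sum_le (c := γ ∅) hF0 (fun B => ?_)
    obtain ⟨r, hr⟩ : ∃ r : ℕ, ∀ v ∈ B, v ⊆ Finset.range r := by
      refine ⟨(B.sup fun v => v.sup id) + 1, fun v hv x hx => ?_⟩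
      rw [Finset.mem_range]
      exact Nat.lt_succ_of_le (le_trans (Finset.le_sup (f := id) hx)
        (Finset.le_sup (f := fun v => v.sup id) hv))
    calc ∑ v ∈ B, F v ≤ ∑ v ∈ (Finset.range r).powerset, F v := by
          refine Finset.sum_le_sum_of_subset_of_nonneg ?_ (fun v _ _ => hF0 v)
          intro v hv
          exact Finset.mem_powerset.mpr (hr v hv)
      _ = ∑ w ∈ (Finset.range r \ ∅).powerset, F (∅ ∪ w) := by
          simp
      _ ≤ γ ∅ := hbound ∅ r (Finset.empty_subset _)
  refine ⟨hsumF, ?_⟩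
  intro u
  set f : Finset ℕ → ℝ := fun v => if u ⊆ v then F v else 0 with hf
  have hf0 : ∀ v, 0 ≤ f v := by
    intro v
    simp only [hf]
    split
    · exact hF0 v
    · exact le_rfl
  have hsumf : Summable f := by
    refine hsumF.of_nonneg_of_le hf0 (fun v => ?_)
    simp only [hf]
    split
    · exact le_rfl
    · exact hF0 v
  -- define g as the infimum (which is the limit)
  set g : ℕ → ℝ := fun r => ⨅ s : ℕ, Δ (Finset.range s \ Finset.range r) γ u with hg
  have hganti : ∀ r : ℕ, Antitone (fun s : ℕ => Δ (Finset.range s \ Finset.range r) γ u) := by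
    intro r s t hst
    exact delta_mono γ hcm (Finset.sdiff_subset_sdiff
      (Finset.range_subset_range.mpr hst) (Finset.Subset.refl _)) u
  have hgbdd : ∀ r : ℕ, BddBelow (Set.range fun s : ℕ =>
      Δ (Finset.range s \ Finset.range r) γ u) := by
    intro r
    refine ⟨0, ?_⟩
    rintro x ⟨s, rfl⟩
    exact hcm _ _
  have hgt : ∀ r : ℕ, Tendsto (fun s : ℕ => Δ (Finset.range s \ Finset.range r) γ u)
      atTop (𝓝 (g r)) := fun r => tendsto_atTop_ciInf (hganti r) (hgbdd r)
  have htends : Tendsto g atTop (𝓝 (∑' v, f v)) := by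
    have hpow : Tendsto (fun r : ℕ => (Finset.range r).powerset) atTop atTop := by
      refine tendsto_atTop_finset_of_monotone ?_ ?_
      · intro r r' hrr
        exact Finset.powerset_mono.mpr (Finset.range_subset_range.mpr hrr)
      · intro v
        refine ⟨v.sup id + 1, Finset.mem_powerset.mpr (fun x hx => ?_)⟩
        rw [Finset.mem_range]
        exact Nat.lt_succ_of_le (Finset.le_sup (f := id) hx)
    have h1 : Tendsto (fun r : ℕ => ∑ v ∈ (Finset.range r).powerset, f v) atTop
        (𝓝 (∑' v, f v)) := hsumf.hasSum.comp hpow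
    refine h1.congr' ?_
    filter_upwards [eventually_ge_atTop (u.sup id + 1)] with r hr
    have hur : u ⊆ Finset.range r := by
      intro x hx
      rw [Finset.mem_range]
      exact lt_of_lt_of_le (Nat.lt_succ_of_le (Finset.le_sup (f := id) hx)) hr
    have := tendsto_nhds_unique (hgt r) (hkey u r hur)
    rw [this, hreindex u r hur]
  have h2 : ∀ᶠ r in atTop, g r ≤ γ u := by
    filter_upwards [eventually_ge_atTop (u.sup id + 1)] with r hr
    have hur : u ⊆ Finset.range r := by
      intro x hx
      rw [Finset.mem_range]
      exact lt_of_lt_of_le (Nat.lt_succ_of_le (Finset.le_sup (f := id) hx)) hr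
    rw [tendsto_nhds_unique (hgt r) (hkey u r hur)]
    exact hbound u r hur
  exact ⟨g, hgt, htends, le_of_tendsto htends h2⟩
end

section
/- Let C > 0 and let γ : 𝒰 → [0,∞) satisfy Σ_{v ∈ 𝒰} C^{2|v|} γ_v < ∞; put γ↑_u := Σ_{v ∈ 𝒰, u ⊆ v} C^{2|v|} γ_v. Then: (i) for every τ > 0, if Σ_{u ∈ 𝒰} (γ↑_u)^{1/τ} < ∞ then Σ_{u ∈ 𝒰} C^{2|u|/τ} γ_u^{1/τ} < ∞; (ii) for every τ ≥ 1, if Σ_{u ∈ 𝒰} 2^{|u|} C^{2|u|/τ} γ_u^{1/τ} < ∞ then Σ_{u ∈ 𝒰} (γ↑_u)^{1/τ} < ∞. -/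
open Finset

private lemma real_rpow_add_le_add_rpow {p : ℝ} (a b : ℝ) (ha : 0 ≤ a) (hb : 0 ≤ b)
    (hp : 0 ≤ p) (hp1 : p ≤ 1) : (a + b) ^ p ≤ a ^ p + b ^ p := by
  lift a to NNReal using ha
  lift b to NNReal using hb
  have := NNReal.rpow_add_le_add_rpow a b hp hp1
  push_cast [← NNReal.coe_rpow] at *
  exact_mod_cast this

private lemma sum_rpow_le {ι : Type*} {p : ℝ} (hp : 0 < p) (hp1 : p ≤ 1)
    (s : Finset ι) (f : ι → ℝ) (hf : ∀ i, 0 ≤ f i) :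
    (∑ i ∈ s, f i) ^ p ≤ ∑ i ∈ s, f i ^ p := by
  induction s using Finset.cons_induction with
  | empty => simp [Real.zero_rpow hp.ne']
  | cons a s ha ih =>
    rw [Finset.sum_cons, Finset.sum_cons]
    calc (f a + ∑ i ∈ s, f i) ^ p ≤ f a ^ p + (∑ i ∈ s, f i) ^ p :=
          real_rpow_add_le_add_rpow _ _ (hf a) (Finset.sum_nonneg fun i _ => hf i) hp.le hp1
      _ ≤ f a ^ p + ∑ i ∈ s, f i ^ p := by gcongr

private lemma tsum_rpow_le {ι : Type*} {p : ℝ} (hp : 0 < p) (hp1 : p ≤ 1)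
    {f : ι → ℝ} (hf : ∀ i, 0 ≤ f i) (hsf : Summable f)
    (hsfp : Summable fun i => f i ^ p) :
    (∑' i, f i) ^ p ≤ ∑' i, f i ^ p := by
  have h1 : Filter.Tendsto (fun s : Finset ι => ∑ i ∈ s, f i) Filter.atTop (nhds (∑' i, f i)) :=
    hsf.hasSum
  have h2 : Filter.Tendsto (fun s : Finset ι => (∑ i ∈ s, f i) ^ p) Filter.atTop
      (nhds ((∑' i, f i) ^ p)) := by
    exact ((Real.continuousAt_rpow_const _ p (Or.inr hp.le)).tendsto.comp h1)
  refine le_of_tendsto h2 (Filter.Eventually.of_forall fun s => ?_)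
  calc (∑ i ∈ s, f i) ^ p ≤ ∑ i ∈ s, f i ^ p := sum_rpow_le hp hp1 s f hf
    _ ≤ ∑' i, f i ^ p := Summable.sum_le_tsum s (fun i _ => Real.rpow_nonneg (hf i) p) hsfp

theorem stmt12 (C : ℝ) (hC : 0 < C) (γ : Finset ℕ → ℝ) (hnn : ∀ u, 0 ≤ γ u)
    (hsum : Summable fun v : Finset ℕ => C ^ (2 * v.card) * γ v)
    (γup : Finset ℕ → ℝ)
    (hγup : ∀ u, γup u = ∑' v : Finset ℕ, if u ⊆ v then C ^ (2 * v.card) * γ v else 0) :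
    (∀ τ : ℝ, 0 < τ →
      (Summable fun u : Finset ℕ => γup u ^ (1 / τ)) →
      Summable fun u : Finset ℕ => C ^ (2 * (u.card : ℝ) / τ) * γ u ^ (1 / τ)) ∧
    (∀ τ : ℝ, 1 ≤ τ →
      (Summable fun u : Finset ℕ =>
        (2 : ℝ) ^ u.card * C ^ (2 * (u.card : ℝ) / τ) * γ u ^ (1 / τ)) →
      Summable fun u : Finset ℕ => γup u ^ (1 / τ)) := by
  have hterm_nn : ∀ v : Finset ℕ, 0 ≤ C ^ (2 * v.card) * γ v := fun v =>
    mul_nonneg (pow_nonneg hC.le _) (hnn v)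
  -- the key identity (C^(2|v|) γ v)^(1/τ) = C^(2|v|/τ) γ v^(1/τ)
  have hid : ∀ (τ : ℝ) (v : Finset ℕ),
      (C ^ (2 * v.card) * γ v) ^ (1 / τ) = C ^ (2 * (v.card : ℝ) / τ) * γ v ^ (1 / τ) := by
    intro τ v
    rw [Real.mul_rpow (pow_nonneg hC.le _) (hnn v), ← Real.rpow_natCast C (2 * v.card),
      ← Real.rpow_mul hC.le]
    congr 1
    push_cast
    ring
  -- summability of the ite family for each u
  have hite_sum : ∀ u : Finset ℕ,
      Summable fun v : Finset ℕ => if u ⊆ v then C ^ (2 * v.card) * γ v else 0 := by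
    intro u
    refine hsum.of_nonneg_of_le (fun v => ?_) (fun v => ?_)
    · split <;> simp [hterm_nn]
    · split
      · exact le_rfl
      · exact hterm_nn v
  have hγup_nn : ∀ u, 0 ≤ γup u := by
    intro u
    rw [hγup u]
    exact tsum_nonneg fun v => by split <;> simp [hterm_nn]
  constructor
  · intro τ hτ hsumup
    have hp : 0 < 1 / τ := by positivity
    have key : ∀ u : Finset ℕ, C ^ (2 * (u.card : ℝ) / τ) * γ u ^ (1 / τ) ≤ γup u ^ (1 / τ) := by
      intro u
      rw [← hid τ u]
      refine Real.rpow_le_rpow (hterm_nn u) ?_ hp.le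
      rw [hγup u]
      have := Summable.le_tsum (hite_sum u) u (fun v _ => by split <;> simp [hterm_nn])
      simpa using this
    refine hsumup.of_nonneg_of_le (fun u => ?_) key
    exact mul_nonneg (Real.rpow_nonneg hC.le _) (Real.rpow_nonneg (hnn u) _)
  · intro τ hτ hsum2
    have hτ0 : 0 < τ := lt_of_lt_of_le one_pos hτ
    have hp : 0 < 1 / τ := by positivity
    have hp1 : 1 / τ ≤ 1 := by
      rw [div_le_one hτ0]; exact hτ
    set h : Finset ℕ → ℝ := fun v => C ^ (2 * (v.card : ℝ) / τ) * γ v ^ (1 / τ) with hh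
    have hh_nn : ∀ v, 0 ≤ h v := fun v =>
      mul_nonneg (Real.rpow_nonneg hC.le _) (Real.rpow_nonneg (hnn v) _)
    have hsum2' : Summable fun v : Finset ℕ => (2 : ℝ) ^ v.card * h v := by
      refine hsum2.congr fun v => ?_
      simp only [hh]
      ring
    have hsumh : Summable h := by
      refine hsum2'.of_nonneg_of_le hh_nn (fun v => ?_)
      have h2 : (1:ℝ) ≤ 2 ^ v.card := one_le_pow₀ (by norm_num)
      nlinarith [hh_nn v]
    -- summability of G on the product
    have hG_nn : ∀ q : Finset ℕ × Finset ℕ, 0 ≤ (if q.2 ⊆ q.1 then h q.1 else 0) := by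
      intro q; split <;> simp [hh_nn]
    have hGslice : ∀ v : Finset ℕ, Summable fun u : Finset ℕ => if u ⊆ v then h v else 0 := by
      intro v
      refine summable_of_ne_finset_zero (s := v.powerset) fun u hu => ?_
      rw [if_neg]
      exact fun hsub => hu (Finset.mem_powerset.mpr hsub)
    have hGslice_sum : ∀ v : Finset ℕ,
        (∑' u : Finset ℕ, if u ⊆ v then h v else 0) = (2 : ℝ) ^ v.card * h v := by
      intro v
      rw [tsum_eq_sum (s := v.powerset) (fun u hu => by
        rw [if_neg]; exact fun hsub => hu (Finset.mem_powerset.mpr hsub))]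
      rw [Finset.sum_congr rfl (fun u hu => if_pos (Finset.mem_powerset.mp hu))]
      rw [Finset.sum_const, Finset.card_powerset, nsmul_eq_mul]
      push_cast
      ring
    have hG : Summable fun q : Finset ℕ × Finset ℕ => if q.2 ⊆ q.1 then h q.1 else 0 := by
      refine (summable_prod_of_nonneg hG_nn).mpr ⟨fun v => hGslice v, ?_⟩
      refine hsum2'.congr fun v => ?_
      exact (hGslice_sum v).symm
    have hF : Summable fun q : Finset ℕ × Finset ℕ => if q.1 ⊆ q.2 then h q.2 else 0 := by
      have := (Equiv.prodComm (Finset ℕ) (Finset ℕ)).summable_iff.mpr hG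
      exact this
    have hF_nn : ∀ q : Finset ℕ × Finset ℕ, 0 ≤ (if q.1 ⊆ q.2 then h q.2 else 0) := by
      intro q; split <;> simp [hh_nn]
    have hg : Summable fun u : Finset ℕ => ∑' v : Finset ℕ, if u ⊆ v then h v else 0 :=
      ((summable_prod_of_nonneg hF_nn).mp hF).2
    refine hg.of_nonneg_of_le (fun u => Real.rpow_nonneg (hγup_nn u) _) (fun u => ?_)
    rw [hγup u]
    have hfp : Summable fun v : Finset ℕ =>
        (if u ⊆ v then C ^ (2 * v.card) * γ v else 0) ^ (1 / τ) := by
      refine (((summable_prod_of_nonneg hF_nn).mp hF).1 u).congr fun v => ?_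
      split
      · rw [hid]
      · rw [Real.zero_rpow hp.ne']
    calc (∑' v : Finset ℕ, if u ⊆ v then C ^ (2 * v.card) * γ v else 0) ^ (1 / τ)
        ≤ ∑' v : Finset ℕ, (if u ⊆ v then C ^ (2 * v.card) * γ v else 0) ^ (1 / τ) :=
          tsum_rpow_le hp hp1 (fun v => by split <;> simp [hterm_nn]) (hite_sum u) hfp
      _ = ∑' v : Finset ℕ, if u ⊆ v then h v else 0 := by
          refine tsum_congr fun v => ?_
          split
          · rw [hid]
          · rw [Real.zero_rpow hp.ne']
end

section
/- Let (γ_j)_{j ∈ ℕ} be a non-increasing sequence with 0 ≤ γ_j ≤ 1 for all j, and define the product weights γ : 𝒰 → [0,∞) by γ_u := Π_{j ∈ u} γ_j; then γ is completely monotone, and for any C > 0 the following hold: (a) γ_u → 0 along the net directed by max u (i.e., ∀ε > 0 ∃r ∀u with max u ≥ r: γ_u < ε) if and only if lim_{j → ∞} γ_j = 0; (b) T↓ γ = 0 if and only if Σ_{j ∈ ℕ} γ_j = ∞, where (T↓ γ)_u := C^{−2|u|} lim_{s → ∞} (Δ_{[s] ∖ u} γ)_u; (c) the following are equivalent: for every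 u ∈ 𝒰, lim_{r → ∞} lim_{s → ∞} (Δ_{[s] ∖ [r]} γ)_u = γ_u; Σ_{j ∈ ℕ} γ_j < ∞; Σ_{u ∈ 𝒰} γ_u < ∞. -/
open Finset Filter Topology

lemma aux_exp_le (x : ℝ) (h0 : 0 ≤ x) (h2 : x ≤ 1/2) :
    Real.exp (-(2*x)) ≤ 1 - x := by
  have h1 : 1 + 2*x ≤ Real.exp (2*x) := by
    have := Real.add_one_le_exp (2*x); linarith
  have hE : 0 < Real.exp (-(2*x)) := Real.exp_pos _
  have hmul : Real.exp (-(2*x)) * Real.exp (2*x) = 1 := by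
    rw [← Real.exp_add]; ring_nf; exact Real.exp_zero
  nlinarith [mul_le_mul_of_nonneg_left h1 hE.le]

lemma aux_one_sub_le (x : ℝ) : 1 - x ≤ Real.exp (-x) := by
  have := Real.add_one_le_exp (-x); linarith

lemma delta_formula (γseq : ℕ → ℝ) (γ : Finset ℕ → ℝ) (hγ : ∀ u, γ u = ∏ j ∈ u, γseq j)
    (v u : Finset ℕ) :
    Δ v γ u = γ u * ∏ j ∈ v, (if j ∈ u then 0 else (1 - γseq j)) := by
  have hpt : ∀ j, (if j ∈ u then (0:ℝ) else (1 - γseq j))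
      = (if j ∈ u then (-1:ℝ) else -γseq j) + 1 := by
    intro j; split <;> ring
  simp only [hpt]
  rw [Finset.prod_add]
  simp only [Finset.prod_const_one, mul_one, Finset.mul_sum]
  unfold Δ
  apply Finset.sum_congr rfl
  intro w hw
  have h1 : ∏ j ∈ w, ((if j ∈ u then (-1:ℝ) else -γseq j))
      = (-1)^w.card * ∏ j ∈ w, (if j ∈ u then (1:ℝ) else γseq j) := by
    rw [← Finset.prod_const (-1 : ℝ), ← Finset.prod_mul_distrib]
    apply Finset.prod_congr rfl
    intro j _; split <;> ring
  have h2 : γ (u ∪ w) = γ u * ∏ j ∈ w, (if j ∈ u then (1:ℝ) else γseq j) := by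
    have hw' : ∏ j ∈ w, (if j ∈ u then (1:ℝ) else γseq j) = ∏ j ∈ w \ u, γseq j := by
      rw [Finset.sdiff_eq_filter, Finset.prod_filter]
      apply Finset.prod_congr rfl
      intro j _
      by_cases h : j ∈ u <;> simp [h]
    rw [hw', hγ, hγ, ← Finset.prod_union Finset.disjoint_sdiff,
      Finset.union_sdiff_self_eq_union]
  rw [h1, h2]; ring

lemma prod_lower (γseq : ℕ → ℝ) (hnn : ∀ j, 0 ≤ γseq j) (F : Finset ℕ)
    (h : ∀ j ∈ F, γseq j ≤ 1/2) :
    Real.exp (-(2 * ∑ j ∈ F, γseq j)) ≤ ∏ j ∈ F, (1 - γseq j) := by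
  have : -(2 * ∑ j ∈ F, γseq j) = ∑ j ∈ F, -(2 * γseq j) := by
    rw [Finset.mul_sum, ← Finset.sum_neg_distrib]
  rw [this, Real.exp_sum]
  exact Finset.prod_le_prod (fun j _ => (Real.exp_pos _).le)
    (fun j hj => aux_exp_le _ (hnn j) (h j hj))

lemma prod_upper (γseq : ℕ → ℝ) (hnn : ∀ j, 0 ≤ γseq j) (hle : ∀ j, γseq j ≤ 1)
    (F : Finset ℕ) :
    ∏ j ∈ F, (1 - γseq j) ≤ Real.exp (-(∑ j ∈ F, γseq j)) := by
  have : -(∑ j ∈ F, γseq j) = ∑ j ∈ F, -(γseq j) := by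
    rw [← Finset.sum_neg_distrib]
  rw [this, Real.exp_sum]
  exact Finset.prod_le_prod (fun j _ => by linarith [hle j])
    (fun j _ => aux_one_sub_le _)

theorem stmt14 (C : ℝ) (hC : 0 < C) (γseq : ℕ → ℝ) (hmono : Antitone γseq)
    (hnn : ∀ j, 0 ≤ γseq j) (hle : ∀ j, γseq j ≤ 1)
    (γ : Finset ℕ → ℝ) (hγ : ∀ u, γ u = ∏ j ∈ u, γseq j) :
    -- γ is completely monotone
    (∀ v u : Finset ℕ, 0 ≤ Δ v γ u) ∧
    -- (a)
    ((∀ ε > (0 : ℝ), ∃ r : ℕ, ∀ u : Finset ℕ, r ≤ u.sup id → γ u < ε) ↔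
      Tendsto γseq atTop (𝓝 0)) ∧
    -- (b)
    (∀ Td : Finset ℕ → ℝ,
      (∀ u : Finset ℕ, Tendsto (fun s : ℕ => Δ (Finset.range s \ u) γ u) atTop
        (𝓝 (C ^ (2 * u.card) * Td u))) →
      ((∀ u, Td u = 0) ↔ ¬ Summable γseq)) ∧
    -- (c)
    ((∀ u : Finset ℕ, ∃ g : ℕ → ℝ,
        (∀ r : ℕ, Tendsto (fun s : ℕ => Δ (Finset.range s \ Finset.range r) γ u) atTop
          (𝓝 (g r))) ∧
        Tendsto g atTop (𝓝 (γ u))) ↔ Summable γseq) ∧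
    (Summable γseq ↔ Summable γ) := by
  have key : ∀ v u : Finset ℕ, Δ v γ u = γ u * ∏ j ∈ v, (if j ∈ u then 0 else (1 - γseq j)) :=
    delta_formula γseq γ hγ
  have hγnn : ∀ u, 0 ≤ γ u := fun u => by
    rw [hγ]; exact Finset.prod_nonneg fun j _ => hnn j
  have hγle : ∀ u, γ u ≤ 1 := fun u => by
    rw [hγ]; exact Finset.prod_le_one (fun j _ => hnn j) (fun j _ => hle j)
  have hΔnn : ∀ v u : Finset ℕ, 0 ≤ Δ v γ u := by
    intro v u
    rw [key]
    apply mul_nonneg (hγnn u)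
    apply Finset.prod_nonneg
    intro j _
    split
    · exact le_refl 0
    · linarith [hle j]
  -- simplification when the difference set avoids u
  have hdisj : ∀ (u F : Finset ℕ), (∀ j ∈ F, j ∉ u) →
      Δ F γ u = γ u * ∏ j ∈ F, (1 - γseq j) := by
    intro u F hF
    rw [key]
    congr 1
    exact Finset.prod_congr rfl fun j hj => if_neg (hF j hj)
  -- sum over range s \ u grows
  have hsum_grow : ∀ (u : Finset ℕ) (s : ℕ),
      (∑ j ∈ Finset.range s, γseq j) - u.card ≤ ∑ j ∈ Finset.range s \ u, γseq j := by
    intro u s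
    have h1 : ∑ j ∈ Finset.range s ∩ u, γseq j + ∑ j ∈ Finset.range s \ u, γseq j
        = ∑ j ∈ Finset.range s, γseq j := Finset.sum_inter_add_sum_sdiff _ _ _
    have h2 : ∑ j ∈ Finset.range s ∩ u, γseq j ≤ (u.card : ℝ) := by
      calc ∑ j ∈ Finset.range s ∩ u, γseq j ≤ ∑ j ∈ Finset.range s ∩ u, 1 :=
            Finset.sum_le_sum fun j _ => hle j
        _ = ((Finset.range s ∩ u).card : ℝ) := by simp
        _ ≤ (u.card : ℝ) := by
            exact_mod_cast Finset.card_le_card Finset.inter_subset_right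
    linarith
  -- tendsto 0 when not summable
  have hfact_nn : ∀ (u : Finset ℕ) (j : ℕ), 0 ≤ (if j ∈ u then (0:ℝ) else 1 - γseq j) := by
    intro u j; split
    · exact le_refl 0
    · linarith [hle j]
  have F5 : ¬ Summable γseq → ∀ u v : Finset ℕ,
      Tendsto (fun s : ℕ => Δ (Finset.range s \ v) γ u) atTop (𝓝 0) := by
    intro hns u v
    have hS : Tendsto (fun s : ℕ => ∑ j ∈ Finset.range s, γseq j) atTop atTop :=
      (not_summable_iff_tendsto_nat_atTop_of_nonneg hnn).1 hns
    have hub : ∀ s : ℕ, Δ (Finset.range s \ v) γ u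
        ≤ Real.exp ((v.card : ℝ) - ∑ j ∈ Finset.range s, γseq j) := by
      intro s
      rw [key]
      have hp0 : 0 ≤ ∏ j ∈ Finset.range s \ v, (if j ∈ u then (0:ℝ) else 1 - γseq j) :=
        Finset.prod_nonneg fun j _ => hfact_nn u j
      calc γ u * ∏ j ∈ Finset.range s \ v, (if j ∈ u then (0:ℝ) else 1 - γseq j)
          ≤ 1 * ∏ j ∈ Finset.range s \ v, (if j ∈ u then (0:ℝ) else 1 - γseq j) :=
            mul_le_mul_of_nonneg_right (hγle u) hp0
        _ = ∏ j ∈ Finset.range s \ v, (if j ∈ u then (0:ℝ) else 1 - γseq j) := one_mul _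
        _ ≤ ∏ j ∈ Finset.range s \ v, Real.exp (-(γseq j)) := by
            apply Finset.prod_le_prod (fun j _ => hfact_nn u j)
            intro j _
            split
            · exact (Real.exp_pos _).le
            · exact aux_one_sub_le _
        _ = Real.exp (∑ j ∈ Finset.range s \ v, -(γseq j)) := (Real.exp_sum _ _).symm
        _ ≤ Real.exp ((v.card : ℝ) - ∑ j ∈ Finset.range s, γseq j) := by
            apply Real.exp_le_exp.2
            rw [Finset.sum_neg_distrib]
            have := hsum_grow v s
            linarith
    exact tendsto_of_tendsto_of_tendsto_of_le_of_le (g := fun _ => (0:ℝ))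
      tendsto_const_nhds
      (by
        have h1 : Tendsto (fun s : ℕ => (v.card : ℝ) - ∑ j ∈ Finset.range s, γseq j)
            atTop atBot := by
          have := tendsto_neg_atTop_atBot.comp hS
          have h2 := tendsto_atBot_add_const_left atTop ((v.card : ℝ)) this
          simpa [sub_eq_add_neg, Function.comp] using h2
        exact Real.tendsto_exp_atBot.comp h1)
      (fun s => hΔnn _ _) hub
  refine ⟨hΔnn, ?_, ?_, ?_, ?_⟩
  · -- part (a)
    constructor
    · intro h
      rw [Metric.tendsto_atTop]
      intro ε hε
      obtain ⟨r, hr⟩ := h ε hε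
      refine ⟨r, fun n hn => ?_⟩
      have hsup : r ≤ ({n} : Finset ℕ).sup id := by simpa using hn
      have h2 := hr {n} hsup
      rw [hγ] at h2
      simp only [Finset.prod_singleton] at h2
      rw [Real.dist_eq, sub_zero, abs_of_nonneg (hnn n)]
      exact h2
    · intro h ε hε
      have hev : ∀ᶠ n in atTop, γseq n < ε := h.eventually_lt_const hε
      obtain ⟨N, hN⟩ := eventually_atTop.1 hev
      refine ⟨N + 1, fun u hu => ?_⟩
      obtain ⟨m, hm, hm'⟩ := (Finset.le_sup_iff (by omega : (0:ℕ) < N+1)).1 hu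
      simp only [id] at hm'
      have h1 : γ u ≤ γseq m := by
        rw [hγ, ← Finset.mul_prod_erase u γseq hm]
        have h2 : ∏ j ∈ u.erase m, γseq j ≤ 1 :=
          Finset.prod_le_one (fun j _ => hnn j) (fun j _ => hle j)
        nlinarith [hnn m, Finset.prod_nonneg (fun j (_ : j ∈ u.erase m) => hnn j)]
      exact lt_of_le_of_lt h1 (hN m (by omega))
  · -- part (b)
    intro Td hTd
    constructor
    · intro h0 hsum
      have hz : Tendsto γseq atTop (𝓝 0) := hsum.tendsto_atTop_zero
      obtain ⟨N, hN⟩ := eventually_atTop.1 (hz.eventually_le_const (by norm_num : (0:ℝ) < 1/2))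
      set u : Finset ℕ := (Finset.range N).filter (fun j => γseq j ≠ 0) with hu
      have hγupos : 0 < γ u := by
        rw [hγ]
        apply Finset.prod_pos
        intro j hj
        exact lt_of_le_of_ne (hnn j) (Ne.symm (Finset.mem_filter.1 hj).2)
      set M := ∑' j, γseq j with hM
      have hlow : ∀ s : ℕ, γ u * Real.exp (-(2 * M)) ≤ Δ (Finset.range s \ u) γ u := by
        intro s
        rw [hdisj u _ (fun j hj => (Finset.mem_sdiff.1 hj).2)]
        apply mul_le_mul_of_nonneg_left _ (hγnn u)
        calc Real.exp (-(2*M))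
            ≤ Real.exp (-(2 * ∑ j ∈ Finset.range s \ u, γseq j)) := by
              apply Real.exp_le_exp.2
              have h3 : ∑ j ∈ Finset.range s \ u, γseq j ≤ M :=
                Summable.sum_le_tsum _ (fun j _ => hnn j) hsum
              linarith
          _ ≤ ∏ j ∈ Finset.range s \ u, (1 - γseq j) := by
              apply prod_lower γseq hnn
              intro j hj
              rcases Finset.mem_sdiff.1 hj with ⟨hjs, hju⟩
              by_cases hjN : N ≤ j
              · exact hN j hjN
              · have hz0 : γseq j = 0 := by
                  by_contra hne
                  exact hju (Finset.mem_filter.2 ⟨Finset.mem_range.2 (by omega), hne⟩)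
                rw [hz0]; norm_num
      have hge : γ u * Real.exp (-(2 * M)) ≤ C ^ (2 * u.card) * Td u :=
        le_of_tendsto_of_tendsto' tendsto_const_nhds (hTd u) hlow
      rw [h0 u, mul_zero] at hge
      nlinarith [Real.exp_pos (-(2*M))]
    · intro hns u
      have heq := tendsto_nhds_unique (hTd u) (F5 hns u u)
      have hCne : C ^ (2 * u.card) ≠ 0 := pow_ne_zero _ (ne_of_gt hC)
      rcases mul_eq_zero.1 heq with h | h
      · exact absurd h hCne
      · exact h
  · -- part (c) first iff
    constructor
    · intro h
      by_contra hns
      obtain ⟨g, hg1, hg2⟩ := h ∅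
      have hg0 : ∀ r, g r = 0 := fun r => tendsto_nhds_unique (hg1 r) (F5 hns ∅ (Finset.range r))
      have hgz : Tendsto g atTop (𝓝 0) := by
        have : g = fun _ => (0:ℝ) := funext hg0
        rw [this]; exact tendsto_const_nhds
      have h1 := tendsto_nhds_unique hg2 hgz
      rw [hγ] at h1
      simp at h1
    · intro hsum u
      set f : ℕ → ℕ → ℝ := fun r s => Δ (Finset.range s \ Finset.range r) γ u with hf
      have hfact_le : ∀ j : ℕ, (if j ∈ u then (0:ℝ) else 1 - γseq j) ≤ 1 := by
        intro j; split
        · norm_num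
        · linarith [hnn j]
      have hf_mono : ∀ r, Antitone (f r) := by
        intro r s s' hss'
        simp only [hf, key]
        apply mul_le_mul_of_nonneg_left _ (hγnn u)
        have hsub : Finset.range s \ Finset.range r ⊆ Finset.range s' \ Finset.range r :=
          Finset.sdiff_subset_sdiff (Finset.range_subset_range.2 hss') (le_refl _)
        rw [← Finset.prod_sdiff hsub]
        have h1 : ∏ j ∈ (Finset.range s' \ Finset.range r) \ (Finset.range s \ Finset.range r),
            (if j ∈ u then (0:ℝ) else 1 - γseq j) ≤ 1 :=
          Finset.prod_le_one (fun j _ => hfact_nn u j) (fun j _ => hfact_le j)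
        have h2 : 0 ≤ ∏ j ∈ Finset.range s \ Finset.range r,
            (if j ∈ u then (0:ℝ) else 1 - γseq j) :=
          Finset.prod_nonneg (fun j _ => hfact_nn u j)
        nlinarith
      have hbdd : ∀ r, BddBelow (Set.range (f r)) := by
        intro r
        refine ⟨0, ?_⟩
        rintro x ⟨s, rfl⟩
        exact hΔnn _ _
      set g : ℕ → ℝ := fun r => ⨅ s, f r s with hg
      have hg1 : ∀ r, Tendsto (f r) atTop (𝓝 (g r)) := fun r =>
        tendsto_atTop_ciInf (hf_mono r) (hbdd r)
      refine ⟨g, hg1, ?_⟩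
      have hz : Tendsto γseq atTop (𝓝 0) := hsum.tendsto_atTop_zero
      obtain ⟨N, hN⟩ := eventually_atTop.1 (hz.eventually_le_const (by norm_num : (0:ℝ) < 1/2))
      set T : ℕ → ℝ := fun r => ∑' k, γseq (k + r) with hT
      have hTlim : Tendsto T atTop (𝓝 0) := tendsto_sum_nat_add γseq
      have hupper : ∀ r, g r ≤ γ u := by
        intro r
        have hrr : f r r = γ u := by
          simp [hf, Δ]
        calc g r ≤ f r r := ciInf_le (hbdd r) r
          _ = γ u := hrr
      have hlower : ∀ᶠ r in atTop, γ u * Real.exp (-(2 * T r)) ≤ g r := by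
        rw [eventually_atTop]
        refine ⟨max N (u.sup id + 1), fun r hr => ?_⟩
        apply le_ciInf
        intro s
        have hrN : N ≤ r := le_trans (le_max_left _ _) hr
        have hrU : u.sup id + 1 ≤ r := le_trans (le_max_right _ _) hr
        have hru : ∀ j ∈ Finset.range s \ Finset.range r, j ∉ u := by
          intro j hj hju
          have h1 : r ≤ j := by
            have := (Finset.mem_sdiff.1 hj).2
            simp only [Finset.mem_range, not_lt] at this
            exact this
          have h2 : j ≤ u.sup id := Finset.le_sup (f := id) hju
          omega
        show γ u * Real.exp (-(2 * T r)) ≤ Δ (Finset.range s \ Finset.range r) γ u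
        rw [hdisj u _ hru]
        apply mul_le_mul_of_nonneg_left _ (hγnn u)
        calc Real.exp (-(2 * T r))
            ≤ Real.exp (-(2 * ∑ j ∈ Finset.range s \ Finset.range r, γseq j)) := by
              apply Real.exp_le_exp.2
              have hIco : Finset.range s \ Finset.range r = Finset.Ico r s := by
                ext j
                simp only [Finset.mem_sdiff, Finset.mem_range, Finset.mem_Ico, not_lt]
                omega
              have h3 : ∑ j ∈ Finset.range s \ Finset.range r, γseq j ≤ T r := by
                rw [hIco, Finset.sum_Ico_eq_sum_range]
                have hsum' : Summable (fun k => γseq (k + r)) := (summable_nat_add_iff r).2 hsum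
                calc ∑ i ∈ Finset.range (s - r), γseq (r + i)
                    = ∑ i ∈ Finset.range (s - r), γseq (i + r) := by
                      refine Finset.sum_congr rfl fun i _ => ?_
                      rw [add_comm]
                  _ ≤ T r := Summable.sum_le_tsum _ (fun k _ => hnn _) hsum'
              linarith
          _ ≤ ∏ j ∈ Finset.range s \ Finset.range r, (1 - γseq j) := by
              apply prod_lower γseq hnn
              intro j hj
              apply hN
              have := (Finset.mem_sdiff.1 hj).2
              simp only [Finset.mem_range, not_lt] at this
              omega
      have h3 : Tendsto (fun r => -(2 * T r)) atTop (𝓝 0) := by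
        have h4 := hTlim.const_mul (2:ℝ)
        simpa using h4.neg
      have h4 : Tendsto (fun r => Real.exp (-(2 * T r))) atTop (𝓝 1) := by
        have := (Real.continuous_exp.tendsto 0).comp h3
        simpa [Function.comp_def] using this
      have hlim2 := h4.const_mul (γ u)
      rw [mul_one] at hlim2
      exact tendsto_of_tendsto_of_tendsto_of_le_of_le' hlim2 tendsto_const_nhds hlower
        (Eventually.of_forall hupper)
  · -- part (c) second iff
    constructor
    · intro hsum
      apply summable_of_sum_le (fun u => hγnn u)
      intro S
      set N := (S.sup fun u => u.sup id) + 1 with hN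
      have hSsub : S ⊆ (Finset.range N).powerset := by
        intro u hu
        rw [Finset.mem_powerset]
        intro j hj
        rw [Finset.mem_range]
        have h1 : j ≤ u.sup id := Finset.le_sup (f := id) hj
        have h2 : u.sup id ≤ S.sup (fun u => u.sup id) := Finset.le_sup hu
        omega
      calc ∑ u ∈ S, γ u ≤ ∑ u ∈ (Finset.range N).powerset, γ u :=
            Finset.sum_le_sum_of_subset_of_nonneg hSsub (fun u _ _ => hγnn u)
        _ = ∏ j ∈ Finset.range N, (γseq j + 1) := by
            rw [Finset.prod_add]
            refine Finset.sum_congr rfl fun w hw => ?_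
            simp [hγ w]
        _ ≤ ∏ j ∈ Finset.range N, Real.exp (γseq j) :=
            Finset.prod_le_prod (fun j _ => by linarith [hnn j]) (fun j _ => by
              have := Real.add_one_le_exp (γseq j); linarith)
        _ = Real.exp (∑ j ∈ Finset.range N, γseq j) := (Real.exp_sum _ _).symm
        _ ≤ Real.exp (∑' j, γseq j) :=
            Real.exp_le_exp.2 (Summable.sum_le_tsum _ (fun j _ => hnn j) hsum)
    · intro hγsum
      have h1 : Summable (fun j : ℕ => γ {j}) :=
        hγsum.comp_injective (fun a b h => Finset.singleton_injective h)
      apply h1.congr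
      intro j
      rw [hγ]
      simp
end

section
/- Let C > 0. (i) For product weights γ_u = Π_{j ∈ u} γ_j with (γ_j) non-increasing and non-negative, one has Σ_{u ∈ 𝒰} C^{2|u|} γ_u < ∞ if and only if Σ_{j ∈ ℕ} γ_j < ∞. (ii) For POD weights γ_u = Γ_{|u|} Π_{j ∈ u} γ_j with (γ_j) non-increasing and non-negative, Γ_k ≤ C_a (k!)^a for constants a, C_a > 0, and p := sup{τ > 0 : Σ_j γ_j^{1/τ} < ∞} (sup ∅ := 0): if p > a and Γ_1 > 0, then Σ_{u ∈ 𝒰} C^{2|u|} γ_u < ∞ if and only if Σ_{j ∈ ℕ} γ_j < ∞; and if p = a ≥ 1 and Σ_{j ∈ ℕ} (C² γ_j)^{1/p} < 1, then Σ_{u ∈ 𝒰} C^{2|u|} γ_u < ∞. (iii) For finite-order weights γ (i.e., γ : 𝒰 → [0,∞) with γ_u = 0 whenever |u| > ω, for some ω ∈ ℕ), Σ_{u ∈ 𝒰} C^{2|u|} γ_u < ∞ if and only if Σ_{u ∈ 𝒰} γ_u < ∞. -/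
open Finset

/-- The decay of a family of non-negative reals:
`decay(a) := sup {τ > 0 : Σ_v a_v^{1/τ} < ∞}` (with `sup ∅ := 0`),
taking values in `[0, ∞]`. -/
noncomputable def decay {V : Type*} (f : V → ℝ) : ENNReal :=
  ⨆ (t : ℝ) (_ : 0 < t ∧ Summable fun v => f v ^ (1 / t)), ENNReal.ofReal t

private lemma binom_lb (x y : ℝ) (hx : 0 ≤ x) (hy : 0 ≤ y) :
    ∀ m : ℕ, y ^ (m + 1) + (m + 1 : ℝ) * x * y ^ m ≤ (x + y) ^ (m + 1) := by
  intro m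
  induction m with
  | zero => simp; nlinarith
  | succ m ih =>
    have hxy : (0:ℝ) ≤ x + y := by linarith
    have h2 := mul_le_mul_of_nonneg_left ih hxy
    have h4 : (0:ℝ) ≤ ((m:ℝ) + 1) * (x * x * y ^ m) := by positivity
    have h7 : (x + y) * (y ^ (m + 1) + ((m:ℝ) + 1) * x * y ^ m)
        = y ^ (m + 1 + 1) + ((m:ℝ) + 1 + 1) * x * y ^ (m + 1)
          + ((m:ℝ) + 1) * (x * x * y ^ m) := by ring
    have h3 : (x + y) ^ (m + 1 + 1) = (x + y) * (x + y) ^ (m + 1) := by ring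
    push_cast
    nlinarith [h2, h4, h7, h3]

private lemma key_esymm (c : ℕ → ℝ) (hc : ∀ j, 0 ≤ c j) (s : Finset ℕ) :
    ∀ k : ℕ, (k.factorial : ℝ) * ∑ u ∈ s.powersetCard k, ∏ j ∈ u, c j
      ≤ (∑ j ∈ s, c j) ^ k := by
  classical
  induction s using Finset.induction_on with
  | empty =>
    intro k
    cases k with
    | zero => simp
    | succ m =>
      have : Finset.powersetCard (m + 1) (∅ : Finset ℕ) = ∅ := by
        rw [Finset.powersetCard_eq_empty]
        simp
      simp [this]
  | @insert a s ha ih =>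
    intro k
    cases k with
    | zero => simp
    | succ m =>
      have hdisj : Disjoint (s.powersetCard (m + 1)) ((s.powersetCard m).image (insert a)) := by
        rw [Finset.disjoint_left]
        intro u hu hu'
        obtain ⟨v, hv, rfl⟩ := Finset.mem_image.1 hu'
        exact ha ((Finset.mem_powersetCard.1 hu).1 (Finset.mem_insert_self a v))
      have himg : ∀ u ∈ s.powersetCard m, ∀ v ∈ s.powersetCard m,
          insert a u = insert a v → u = v := by
        intro u hu v hv h
        have hau : a ∉ u := fun h' => ha ((Finset.mem_powersetCard.1 hu).1 h')
        have hav : a ∉ v := fun h' => ha ((Finset.mem_powersetCard.1 hv).1 h')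
        rw [← Finset.erase_insert hau, ← Finset.erase_insert hav, h]
      rw [Finset.powersetCard_succ_insert ha, Finset.sum_union hdisj,
        Finset.sum_image himg, Finset.sum_insert ha]
      have hprod : ∀ u ∈ s.powersetCard m, ∏ j ∈ insert a u, c j = c a * ∏ j ∈ u, c j := by
        intro u hu
        exact Finset.prod_insert (fun h' => ha ((Finset.mem_powersetCard.1 hu).1 h'))
      rw [Finset.sum_congr rfl hprod, ← Finset.mul_sum]
      have h1 := ih (m + 1)
      have h2 := ih m
      have hSnn : (0:ℝ) ≤ ∑ j ∈ s, c j := Finset.sum_nonneg fun j _ => hc j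
      have h3 := binom_lb (c a) (∑ j ∈ s, c j) (hc a) hSnn m
      have hfact : (((m + 1).factorial : ℕ) : ℝ) = ((m : ℝ) + 1) * (m.factorial : ℝ) := by
        push_cast [Nat.factorial_succ]; ring
      have hE : 0 ≤ ∑ u ∈ s.powersetCard m, ∏ j ∈ u, c j :=
        Finset.sum_nonneg fun u _ => Finset.prod_nonneg fun j _ => hc j
      have h4 : (((m : ℝ) + 1) * c a) * ((m.factorial : ℝ) * ∑ u ∈ s.powersetCard m, ∏ j ∈ u, c j)
          ≤ (((m : ℝ) + 1) * c a) * (∑ j ∈ s, c j) ^ m := by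
        exact mul_le_mul_of_nonneg_left h2 (mul_nonneg (by positivity) (hc a))
      rw [hfact] at h1 ⊢
      nlinarith [h1, h3, h4]

private lemma summable_card_rpow (c : ℕ → ℝ) (hc : ∀ j, 0 ≤ c j) (β : ℝ)
    (hsc : Summable c)
    (hg : Summable fun k : ℕ => (k.factorial : ℝ) ^ (β - 1) * (∑' j, c j) ^ k) :
    Summable fun u : Finset ℕ => (u.card.factorial : ℝ) ^ β * ∏ j ∈ u, c j := by
  classical
  have hS0 : 0 ≤ ∑' j, c j := tsum_nonneg hc
  have hnn : ∀ u : Finset ℕ, 0 ≤ (u.card.factorial : ℝ) ^ β * ∏ j ∈ u, c j := fun u =>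
    mul_nonneg (Real.rpow_nonneg (Nat.cast_nonneg _) _) (Finset.prod_nonneg fun j _ => hc j)
  have hterm : ∀ k : ℕ, (0:ℝ) ≤ (k.factorial : ℝ) ^ (β - 1) * (∑' j, c j) ^ k := fun k =>
    mul_nonneg (Real.rpow_nonneg (Nat.cast_nonneg _) _) (pow_nonneg hS0 _)
  refine summable_of_sum_le hnn (c := ∑' k : ℕ, (k.factorial : ℝ) ^ (β - 1) * (∑' j, c j) ^ k) ?_
  intro F
  set s : Finset ℕ := F.sup id with hs
  have hFs : F ⊆ s.powerset := fun u hu => Finset.mem_powerset.2 (Finset.le_sup (f := id) hu)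
  calc ∑ u ∈ F, (u.card.factorial : ℝ) ^ β * ∏ j ∈ u, c j
      ≤ ∑ u ∈ s.powerset, (u.card.factorial : ℝ) ^ β * ∏ j ∈ u, c j :=
        Finset.sum_le_sum_of_subset_of_nonneg hFs (fun u _ _ => hnn u)
    _ = ∑ k ∈ Finset.range (s.card + 1), ∑ u ∈ s.powersetCard k,
          (u.card.factorial : ℝ) ^ β * ∏ j ∈ u, c j := Finset.sum_powerset s _
    _ ≤ ∑ k ∈ Finset.range (s.card + 1), (k.factorial : ℝ) ^ (β - 1) * (∑' j, c j) ^ k := by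
        apply Finset.sum_le_sum
        intro k _
        have hfk : (0:ℝ) < (k.factorial : ℝ) := by exact_mod_cast k.factorial_pos
        have heq : ∑ u ∈ s.powersetCard k, (u.card.factorial : ℝ) ^ β * ∏ j ∈ u, c j
            = (k.factorial : ℝ) ^ β * ∑ u ∈ s.powersetCard k, ∏ j ∈ u, c j := by
          rw [Finset.mul_sum]
          refine Finset.sum_congr rfl fun u hu => ?_
          rw [(Finset.mem_powersetCard.1 hu).2]
        have hrw : (k.factorial : ℝ) ^ (β - 1) * (k.factorial : ℝ) = (k.factorial : ℝ) ^ β := by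
          rw [Real.rpow_sub hfk, Real.rpow_one, div_mul_cancel₀ _ (ne_of_gt hfk)]
        rw [heq]
        calc (k.factorial : ℝ) ^ β * ∑ u ∈ s.powersetCard k, ∏ j ∈ u, c j
            = (k.factorial : ℝ) ^ (β - 1) *
              ((k.factorial : ℝ) * ∑ u ∈ s.powersetCard k, ∏ j ∈ u, c j) := by
              rw [← hrw]; ring
          _ ≤ (k.factorial : ℝ) ^ (β - 1) * (∑ j ∈ s, c j) ^ k :=
              mul_le_mul_of_nonneg_left (key_esymm c hc s k)
                (Real.rpow_nonneg hfk.le _)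
          _ ≤ (k.factorial : ℝ) ^ (β - 1) * (∑' j, c j) ^ k := by
              apply mul_le_mul_of_nonneg_left _ (Real.rpow_nonneg hfk.le _)
              exact pow_le_pow_left₀ (Finset.sum_nonneg fun j _ => hc j)
                (Summable.sum_le_tsum s (fun j _ => hc j) hsc) k
    _ ≤ ∑' k : ℕ, (k.factorial : ℝ) ^ (β - 1) * (∑' j, c j) ^ k :=
        Summable.sum_le_tsum _ (fun k _ => hterm k) hg

private lemma summable_fact_rpow_mul_pow (β S : ℝ) (hβ : β < 1) (hS : 0 ≤ S) :
    Summable fun k : ℕ => (k.factorial : ℝ) ^ (β - 1) * S ^ k := by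
  refine summable_of_ratio_norm_eventually_le (r := 1/2) (by norm_num) ?_
  have htend : Filter.Tendsto (fun k : ℕ => ((k : ℝ) + 1) ^ (1 - β))
      Filter.atTop Filter.atTop := by
    apply (tendsto_rpow_atTop (by linarith)).comp
    exact Filter.tendsto_atTop_add_const_right _ 1 tendsto_natCast_atTop_atTop
  filter_upwards [htend.eventually_ge_atTop (2 * S)] with k hk
  have hk1 : (0:ℝ) < (k : ℝ) + 1 := by positivity
  have hf : (0:ℝ) < (k.factorial : ℝ) := by exact_mod_cast k.factorial_pos
  have hf1 : (0:ℝ) < ((k + 1).factorial : ℝ) := by exact_mod_cast (k + 1).factorial_pos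
  rw [Real.norm_eq_abs, Real.norm_eq_abs,
    abs_of_nonneg (mul_nonneg (Real.rpow_nonneg hf1.le _) (pow_nonneg hS _)),
    abs_of_nonneg (mul_nonneg (Real.rpow_nonneg hf.le _) (pow_nonneg hS _))]
  have hfs : (((k + 1).factorial : ℕ) : ℝ) = ((k : ℝ) + 1) * (k.factorial : ℝ) := by
    push_cast [Nat.factorial_succ]; ring
  have hmul : (((k + 1).factorial : ℕ) : ℝ) ^ (β - 1)
      = ((k : ℝ) + 1) ^ (β - 1) * (k.factorial : ℝ) ^ (β - 1) := by
    rw [hfs, Real.mul_rpow hk1.le hf.le]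
  have hP : (0:ℝ) < ((k : ℝ) + 1) ^ (1 - β) := Real.rpow_pos_of_pos hk1 _
  have key : ((k : ℝ) + 1) ^ (β - 1) * S ≤ 1 / 2 := by
    rw [show β - 1 = -(1 - β) by ring, Real.rpow_neg hk1.le, inv_mul_le_iff₀ hP]
    linarith
  have h2 : (0:ℝ) ≤ (k.factorial : ℝ) ^ (β - 1) * S ^ k :=
    mul_nonneg (Real.rpow_nonneg hf.le _) (pow_nonneg hS _)
  calc (((k + 1).factorial : ℕ) : ℝ) ^ (β - 1) * S ^ (k + 1)
      = (((k : ℝ) + 1) ^ (β - 1) * S) * ((k.factorial : ℝ) ^ (β - 1) * S ^ k) := by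
        rw [hmul, pow_succ]; ring
    _ ≤ (1 / 2) * ((k.factorial : ℝ) ^ (β - 1) * S ^ k) :=
        mul_le_mul_of_nonneg_right key h2

private lemma summable_rpow_of_summable (x : Finset ℕ → ℝ) (hx : ∀ u, 0 ≤ x u)
    (hsx : Summable x) (τ : ℝ) (hτ : 1 ≤ τ) : Summable fun u => x u ^ τ := by
  have hX0 : 0 ≤ ∑' u, x u := tsum_nonneg hx
  have hb : ∀ u, x u ^ τ ≤ (∑' u, x u) ^ (τ - 1) * x u := by
    intro u
    rcases eq_or_lt_of_le (hx u) with h | h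
    · rw [← h, Real.zero_rpow (by linarith : τ ≠ 0), mul_zero]
    · have hxu : x u ≤ ∑' u, x u := Summable.le_tsum hsx u (fun v _ => hx v)
      calc x u ^ τ = x u ^ (τ - 1) * x u := by
            nth_rewrite 1 [show τ = (τ - 1) + 1 by ring]
            rw [Real.rpow_add h, Real.rpow_one]
        _ ≤ (∑' u, x u) ^ (τ - 1) * x u :=
            mul_le_mul_of_nonneg_right (Real.rpow_le_rpow h.le hxu (by linarith)) (hx u)
  exact Summable.of_nonneg_of_le (fun u => Real.rpow_nonneg (hx u) τ) hb (hsx.mul_left _)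

private lemma pod_summable (C : ℝ) (hC : 0 < C) (γ : ℕ → ℝ) (hγ : ∀ j, 0 ≤ γ j)
    (Γ : ℕ → ℝ) (hΓ : ∀ k, 0 ≤ Γ k) (a Ca τ : ℝ)
    (hbound : ∀ k : ℕ, Γ k ≤ Ca * (k.factorial : ℝ) ^ a)
    (hτ1 : 1 ≤ τ)
    (hsum : Summable fun j => (C ^ 2 * γ j) ^ (1 / τ))
    (hg : Summable fun k : ℕ =>
      (k.factorial : ℝ) ^ (a / τ - 1) * (∑' j, (C ^ 2 * γ j) ^ (1 / τ)) ^ k) :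
    Summable fun u : Finset ℕ => C ^ (2 * u.card) * (Γ u.card * ∏ j ∈ u, γ j) := by
  have hτ0 : 0 < τ := lt_of_lt_of_le zero_lt_one hτ1
  have hc : ∀ j, 0 ≤ (C ^ 2 * γ j) ^ (1 / τ) := fun j => Real.rpow_nonneg
    (mul_nonneg (by positivity) (hγ j)) _
  have hx : Summable fun u : Finset ℕ =>
      (u.card.factorial : ℝ) ^ (a / τ) * ∏ j ∈ u, (C ^ 2 * γ j) ^ (1 / τ) :=
    summable_card_rpow _ hc (a / τ) hsum hg
  have hxnn : ∀ u : Finset ℕ,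
      0 ≤ (u.card.factorial : ℝ) ^ (a / τ) * ∏ j ∈ u, (C ^ 2 * γ j) ^ (1 / τ) := fun u =>
    mul_nonneg (Real.rpow_nonneg (Nat.cast_nonneg _) _) (Finset.prod_nonneg fun j _ => hc j)
  have hxτ := summable_rpow_of_summable _ hxnn hx τ hτ1
  refine Summable.of_nonneg_of_le ?_ ?_ (hxτ.mul_left Ca)
  · intro u
    exact mul_nonneg (pow_nonneg hC.le _) (mul_nonneg (hΓ u.card)
      (Finset.prod_nonneg fun j _ => hγ j))
  · intro u
    have hfk : (0:ℝ) < (u.card.factorial : ℝ) := by exact_mod_cast u.card.factorial_pos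
    have hprodc : (∏ j ∈ u, (C ^ 2 * γ j) ^ (1 / τ)) ^ τ = ∏ j ∈ u, (C ^ 2 * γ j) := by
      rw [Real.finset_prod_rpow u _ (fun j _ => mul_nonneg (by positivity) (hγ j)) (1 / τ),
        ← Real.rpow_mul (Finset.prod_nonneg fun j _ => mul_nonneg (by positivity) (hγ j)),
        one_div, inv_mul_cancel₀ (ne_of_gt hτ0), Real.rpow_one]
    have e1 : ((u.card.factorial : ℝ) ^ (a / τ) * ∏ j ∈ u, (C ^ 2 * γ j) ^ (1 / τ)) ^ τ
        = (u.card.factorial : ℝ) ^ a * ∏ j ∈ u, (C ^ 2 * γ j) := by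
      rw [Real.mul_rpow (Real.rpow_nonneg hfk.le _)
        (Finset.prod_nonneg fun j _ => hc j), hprodc,
        ← Real.rpow_mul hfk.le, div_mul_cancel₀ a (ne_of_gt hτ0)]
    have e2 : C ^ (2 * u.card) * (Γ u.card * ∏ j ∈ u, γ j)
        = Γ u.card * ∏ j ∈ u, (C ^ 2 * γ j) := by
      rw [Finset.prod_mul_distrib, Finset.prod_const, pow_mul]; ring
    calc C ^ (2 * u.card) * (Γ u.card * ∏ j ∈ u, γ j)
        = Γ u.card * ∏ j ∈ u, (C ^ 2 * γ j) := e2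
      _ ≤ (Ca * (u.card.factorial : ℝ) ^ a) * ∏ j ∈ u, (C ^ 2 * γ j) :=
          mul_le_mul_of_nonneg_right (hbound u.card)
            (Finset.prod_nonneg fun j _ => mul_nonneg (by positivity) (hγ j))
      _ = Ca * (((u.card.factorial : ℝ) ^ (a / τ) * ∏ j ∈ u, (C ^ 2 * γ j) ^ (1 / τ)) ^ τ) := by
          rw [e1]; ring

/-- Forward direction via singletons. -/
private lemma summable_singletons {f : Finset ℕ → ℝ} (hf : Summable f) :
    Summable fun j : ℕ => f {j} :=
  hf.comp_injective Finset.singleton_injective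

theorem stmt15 (C : ℝ) (hC : 0 < C) :
    -- (i) product weights
    (∀ γseq : ℕ → ℝ, Antitone γseq → (∀ j, 0 ≤ γseq j) →
      ((Summable fun u : Finset ℕ => C ^ (2 * u.card) * ∏ j ∈ u, γseq j) ↔
        Summable γseq)) ∧
    -- (ii) POD weights
    (∀ (γseq : ℕ → ℝ) (Γ : ℕ → ℝ) (a Ca : ℝ), Antitone γseq → (∀ j, 0 ≤ γseq j) →
      (∀ k, 0 ≤ Γ k) → 0 < a → 0 < Ca →
      (∀ k : ℕ, Γ k ≤ Ca * (k.factorial : ℝ) ^ a) →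
      ((ENNReal.ofReal a < decay γseq → 0 < Γ 1 →
        ((Summable fun u : Finset ℕ => C ^ (2 * u.card) * (Γ u.card * ∏ j ∈ u, γseq j)) ↔
          Summable γseq)) ∧
       (decay γseq = ENNReal.ofReal a → 1 ≤ a →
        (Summable fun j : ℕ => (C ^ 2 * γseq j) ^ (1 / a)) →
        (∑' j : ℕ, (C ^ 2 * γseq j) ^ (1 / a)) < 1 →
        Summable fun u : Finset ℕ => C ^ (2 * u.card) * (Γ u.card * ∏ j ∈ u, γseq j)))) ∧
    -- (iii) finite-order weights
    (∀ (γ : Finset ℕ → ℝ) (ω : ℕ), 0 < ω → (∀ u, 0 ≤ γ u) →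
      (∀ u : Finset ℕ, ω < u.card → γ u = 0) →
      ((Summable fun u : Finset ℕ => C ^ (2 * u.card) * γ u) ↔ Summable γ)) := by
  have hC2 : (0:ℝ) < C ^ 2 := by positivity
  refine ⟨?_, ?_, ?_⟩
  · -- (i) product weights
    intro γseq _ hγ
    constructor
    · intro hf
      have h1 := summable_singletons hf
      have h2 : Summable fun j : ℕ => C ^ 2 * γseq j := by
        refine h1.congr fun j => ?_
        simp
      refine (h2.mul_left ((C ^ 2)⁻¹)).congr fun j => ?_
      rw [← mul_assoc, inv_mul_cancel₀ (ne_of_gt hC2), one_mul]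
    · intro hγs
      have hc : ∀ j, 0 ≤ C ^ 2 * γseq j := fun j => mul_nonneg hC2.le (hγ j)
      have hcs : Summable fun j => C ^ 2 * γseq j := hγs.mul_left _
      have hg := summable_fact_rpow_mul_pow 0 (∑' j, C ^ 2 * γseq j)
        (by norm_num) (tsum_nonneg hc)
      refine (summable_card_rpow _ hc 0 hcs hg).congr fun u => ?_
      rw [Real.rpow_zero, one_mul, Finset.prod_mul_distrib, Finset.prod_const, ← pow_mul]
  · -- (ii) POD weights
    intro γseq Γ a Ca _ hγ hΓ ha hCa hbound
    constructor
    · intro hdec hΓ1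
      constructor
      · intro hf
        have h1 := summable_singletons hf
        have h2 : Summable fun j : ℕ => C ^ 2 * (Γ 1 * γseq j) := by
          refine h1.congr fun j => ?_
          simp
        have hne : (0:ℝ) < C ^ 2 * Γ 1 := by positivity
        refine ((h2.mul_left ((C ^ 2 * Γ 1)⁻¹))).congr fun j => ?_
        field_simp
      · intro hγs
        rw [decay] at hdec
        obtain ⟨t, ht⟩ := lt_iSup_iff.mp hdec
        obtain ⟨⟨ht0, htsum⟩, hat⟩ := lt_iSup_iff.mp ht
        have hat' : a < t := (ENNReal.ofReal_lt_ofReal_iff ht0).mp hat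
        set τ : ℝ := max t 1 with hτdef
        have hτ1 : 1 ≤ τ := le_max_right _ _
        have hτ0 : 0 < τ := lt_of_lt_of_le zero_lt_one hτ1
        have haτ : a < τ := lt_of_lt_of_le hat' (le_max_left _ _)
        have hsumγτ : Summable fun j => γseq j ^ (1 / τ) := by
          rcases le_total 1 t with h1 | h1
          · have : τ = t := max_eq_left h1
            rw [this]; exact htsum
          · have : τ = 1 := max_eq_right h1
            rw [this]
            refine hγs.congr fun j => ?_
            rw [div_one, Real.rpow_one]
        have hsum : Summable fun j => (C ^ 2 * γseq j) ^ (1 / τ) := by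
          refine ((hsumγτ.mul_left ((C ^ 2 : ℝ) ^ (1 / τ)))).congr fun j => ?_
          rw [← Real.mul_rpow hC2.le (hγ j)]
        have hg := summable_fact_rpow_mul_pow (a / τ) (∑' j, (C ^ 2 * γseq j) ^ (1 / τ))
          ((div_lt_one hτ0).mpr haτ)
          (tsum_nonneg fun j => Real.rpow_nonneg (mul_nonneg hC2.le (hγ j)) _)
        exact pod_summable C hC γseq hγ Γ hΓ a Ca τ hbound hτ1 hsum hg
    · intro _ h1a hsum hS1
      have ha0 : a ≠ 0 := by linarith
      have hg : Summable fun k : ℕ =>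
          (k.factorial : ℝ) ^ (a / a - 1) * (∑' j, (C ^ 2 * γseq j) ^ (1 / a)) ^ k := by
        have hdd : a / a - 1 = (0:ℝ) := by field_simp; norm_num
        have hS0 : 0 ≤ ∑' j, (C ^ 2 * γseq j) ^ (1 / a) :=
          tsum_nonneg fun j => Real.rpow_nonneg (mul_nonneg hC2.le (hγ j)) _
        refine (summable_geometric_of_lt_one hS0 hS1).congr fun k => ?_
        rw [hdd, Real.rpow_zero, one_mul]
      exact pod_summable C hC γseq hγ Γ hΓ a Ca a hbound h1a hsum hg
  · -- (iii) finite-order weights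
    intro γ ω _ hγn hzero
    constructor
    · intro hf
      refine Summable.of_nonneg_of_le hγn ?_ (hf.mul_left ((max 1 C⁻¹) ^ (2 * ω)))
      intro u
      rcases (hγn u).eq_or_lt with h | h
      · rw [← h]; simp
      · have hcard : u.card ≤ ω := by
          by_contra hcon
          exact absurd (hzero u (lt_of_not_ge hcon)) (ne_of_gt h)
        have h1 : (C⁻¹) ^ (2 * u.card) ≤ (max 1 C⁻¹) ^ (2 * ω) :=
          le_trans (pow_le_pow_left₀ (inv_nonneg.mpr hC.le) (le_max_right 1 C⁻¹) _)
            (pow_le_pow_right₀ (le_max_left 1 C⁻¹) (by omega))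
        have hinv : (C⁻¹) ^ (2 * u.card) * C ^ (2 * u.card) = 1 := by
          rw [← mul_pow, inv_mul_cancel₀ (ne_of_gt hC), one_pow]
        calc γ u = (C⁻¹) ^ (2 * u.card) * (C ^ (2 * u.card) * γ u) := by
              rw [← mul_assoc, hinv, one_mul]
          _ ≤ (max 1 C⁻¹) ^ (2 * ω) * (C ^ (2 * u.card) * γ u) :=
              mul_le_mul_of_nonneg_right h1
                (mul_nonneg (pow_nonneg hC.le _) (hγn u))
    · intro hγs
      refine Summable.of_nonneg_of_le
        (fun u => mul_nonneg (pow_nonneg hC.le _) (hγn u)) ?_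
        (hγs.mul_left ((max 1 C) ^ (2 * ω)))
      intro u
      rcases (hγn u).eq_or_lt with h | h
      · rw [← h]; simp
      · have hcard : u.card ≤ ω := by
          by_contra hcon
          exact absurd (hzero u (lt_of_not_ge hcon)) (ne_of_gt h)
        have h1 : C ^ (2 * u.card) ≤ (max 1 C) ^ (2 * ω) :=
          le_trans (pow_le_pow_left₀ hC.le (le_max_right 1 C) _)
            (pow_le_pow_right₀ (le_max_left 1 C) (by omega))
        exact mul_le_mul_of_nonneg_right h1 (hγn u)
end

section
/- Let C > 0 and let γ be POD weights, i.e., γ_u = Γ_{|u|} Π_{j ∈ u} γ_j with (γ_j)_{j ∈ ℕ} non-increasing and non-negative, Γ_k ≥ 0 and Γ_k ≤ C_a (k!)^a for all k ≥ 0, for constants a, C_a > 0, and put p := sup{τ > 0 : Σ_j γ_j^{1/τ} < ∞} (sup ∅ := 0). Then: (i) for every j ∈ ℕ, Σ_{u ⊆ [j], j ∈ u} C^{2|u|} γ_u ≥ C² Γ_1 γ_j; (ii) if either (p > a and Σ_{j ∈ ℕ} γ_j < ∞) or (p = a ≥ 1 and Σ_{j ∈ ℕ} (C² γ_j)^{1/p}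 < 1), then there exists a constant c > 0 such that Σ_{u ⊆ [j], j ∈ u} C^{2|u|} γ_u ≤ c γ_j for every j ∈ ℕ. -/
open Finset Filter

private lemma aux_binom (z S : ℝ) (hz : 0 ≤ z) (hS : 0 ≤ S) :
    ∀ n : ℕ, S ^ (n + 1) + ((n : ℝ) + 1) * z * S ^ n ≤ (z + S) ^ (n + 1) := by
  intro n
  induction n with
  | zero => simp; linarith
  | succ n ih =>
    have hzS : 0 ≤ ((n : ℝ) + 1) * (z * z) * S ^ n := by positivity
    push_cast
    calc S ^ (n + 1 + 1) + ((n : ℝ) + 1 + 1) * z * S ^ (n + 1)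
        ≤ (z + S) * (S ^ (n + 1) + ((n : ℝ) + 1) * z * S ^ n) := by
          ring_nf
          nlinarith [pow_nonneg hS n, pow_nonneg hS (n + 1)]
      _ ≤ (z + S) * (z + S) ^ (n + 1) := by
          apply mul_le_mul_of_nonneg_left ih (by linarith)
      _ = (z + S) ^ (n + 1 + 1) := by ring

private lemma esymm_le (z : ℕ → ℝ) (hz : ∀ i, 0 ≤ z i) (s : Finset ℕ) :
    ∀ k : ℕ, (k.factorial : ℝ) * ∑ v ∈ s.powersetCard k, ∏ i ∈ v, z i
      ≤ (∑ i ∈ s, z i) ^ k := by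
  classical
  induction s using Finset.induction_on with
  | empty =>
    intro k
    cases k with
    | zero => simp
    | succ n =>
      rw [Finset.powersetCard_eq_empty.2 (by simp)]
      simp
  | @insert a s ha ih =>
    intro k
    cases k with
    | zero => simp
    | succ n =>
      have hdisj : Disjoint (s.powersetCard (n + 1))
          ((s.powersetCard n).image (insert a)) := by
        rw [Finset.disjoint_left]
        intro v hv hv2
        obtain ⟨w, hw, rfl⟩ := Finset.mem_image.1 hv2
        exact ha ((Finset.mem_powersetCard.1 hv).1 (Finset.mem_insert_self a w))
      have hinj : ∀ x ∈ s.powersetCard n, ∀ y ∈ s.powersetCard n,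
          insert a x = insert a y → x = y := by
        intro x hx y hy hxy
        have hax : a ∉ x := fun h => ha ((Finset.mem_powersetCard.1 hx).1 h)
        have hay : a ∉ y := fun h => ha ((Finset.mem_powersetCard.1 hy).1 h)
        rw [← Finset.erase_insert hax, ← Finset.erase_insert hay, hxy]
      rw [Finset.powersetCard_succ_insert ha, Finset.sum_union hdisj,
        Finset.sum_image hinj, Finset.sum_insert ha]
      have hprod : ∀ v ∈ s.powersetCard n,
          ∏ i ∈ insert a v, z i = z a * ∏ i ∈ v, z i := by
        intro v hv
        exact Finset.prod_insert (fun h => ha ((Finset.mem_powersetCard.1 hv).1 h))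
      rw [Finset.sum_congr rfl hprod, ← Finset.mul_sum]
      have hS : 0 ≤ ∑ i ∈ s, z i := Finset.sum_nonneg fun i _ => hz i
      have hE0 : 0 ≤ ∑ v ∈ s.powersetCard n, ∏ i ∈ v, z i :=
        Finset.sum_nonneg fun v _ => Finset.prod_nonneg fun i _ => hz i
      have hE1 : 0 ≤ ∑ v ∈ s.powersetCard (n + 1), ∏ i ∈ v, z i :=
        Finset.sum_nonneg fun v _ => Finset.prod_nonneg fun i _ => hz i
      have key1 := ih (n + 1)
      have key0 := ih n
      have hb := aux_binom (z a) (∑ i ∈ s, z i) (hz a) hS n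
      have hfs : (((n + 1).factorial : ℝ)) = ((n : ℝ) + 1) * (n.factorial : ℝ) := by
        push_cast [Nat.factorial_succ]; ring
      have h3 : (((n : ℝ) + 1) * z a) * ((n.factorial : ℝ) *
          ∑ v ∈ s.powersetCard n, ∏ i ∈ v, z i) ≤
          (((n : ℝ) + 1) * z a) * (∑ i ∈ s, z i) ^ n := by
        apply mul_le_mul_of_nonneg_left key0 (by have := hz a; positivity)
      rw [hfs] at key1 ⊢
      nlinarith [hb, key1, h3]

private lemma real_add_rpow (x y q : ℝ) (hx : 0 ≤ x) (hy : 0 ≤ y) (hq : 1 ≤ q) :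
    x ^ q + y ^ q ≤ (x + y) ^ q := by
  lift x to NNReal using hx
  lift y to NNReal using hy
  exact_mod_cast NNReal.add_rpow_le_rpow_add x y hq

private lemma sum_rpow_le_rpow_sum {ι : Type*} (s : Finset ι) (f : ι → ℝ)
    (hf : ∀ i, 0 ≤ f i) {q : ℝ} (hq : 1 ≤ q) :
    ∑ i ∈ s, f i ^ q ≤ (∑ i ∈ s, f i) ^ q := by
  classical
  induction s using Finset.induction_on with
  | empty => simp [Real.zero_rpow (by linarith : q ≠ 0)]
  | @insert a s ha ih =>
    rw [Finset.sum_insert ha, Finset.sum_insert ha]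
    calc f a ^ q + ∑ i ∈ s, f i ^ q ≤ f a ^ q + (∑ i ∈ s, f i) ^ q := by linarith
      _ ≤ (f a + ∑ i ∈ s, f i) ^ q :=
        real_add_rpow _ _ q (hf a) (Finset.sum_nonneg fun i _ => hf i) hq

private lemma summable_g (a q T Ca : ℝ) (ha : 0 < a) (hCa : 0 < Ca) (hq1 : 1 ≤ q)
    (hT : 0 ≤ T) (hcase : a < q ∨ (q = a ∧ T < 1)) :
    Summable (fun k : ℕ => Ca * (((k + 1).factorial : ℝ)) ^ a
      * (T ^ k / (k.factorial : ℝ)) ^ q) := by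
  have hqa : a ≤ q := by rcases hcase with h | ⟨rfl, _⟩; exacts [h.le, le_rfl]
  set r := T ^ q with hr
  have hr0 : 0 ≤ r := Real.rpow_nonneg hT q
  have hfact : ∀ k : ℕ, (0 : ℝ) < (k.factorial : ℝ) := fun k => by
    exact_mod_cast k.factorial_pos
  set h : ℕ → ℝ := fun k => Ca * ((k : ℝ) + 1) ^ a * r ^ k * (k.factorial : ℝ) ^ (a - q)
    with hh
  have hg_eq : (fun k : ℕ => Ca * (((k + 1).factorial : ℝ)) ^ a
      * (T ^ k / (k.factorial : ℝ)) ^ q) = h := by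
    funext k
    have h1 : (((k + 1).factorial : ℝ)) = ((k : ℝ) + 1) * (k.factorial : ℝ) := by
      push_cast [Nat.factorial_succ]; ring
    have h2 : ((T : ℝ) ^ k) ^ q = r ^ k := by
      rw [← Real.rpow_natCast T k, ← Real.rpow_natCast r k, hr,
        ← Real.rpow_mul hT, ← Real.rpow_mul hT]
      ring_nf
    have h3 : (k.factorial : ℝ) ^ a / (k.factorial : ℝ) ^ q
        = (k.factorial : ℝ) ^ (a - q) := by
      rw [← Real.rpow_sub (hfact k)]
    rw [hh, h1, Real.mul_rpow (by positivity) (by positivity),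
      Real.div_rpow (by positivity) (by positivity), h2]
    show _ = Ca * ((k : ℝ) + 1) ^ a * r ^ k * (k.factorial : ℝ) ^ (a - q)
    rw [← h3]
    ring
  rw [hg_eq]
  set φ : ℕ → ℝ := fun k => r * (((k : ℝ) + 2) / ((k : ℝ) + 1)) ^ a
    * ((k : ℝ) + 1) ^ (a - q) with hφ
  have hstep : ∀ k : ℕ, h (k + 1) = φ k * h k := by
    intro k
    have hk1 : (0 : ℝ) < (k : ℝ) + 1 := by positivity
    have e1 : ((((k + 1).factorial : ℕ) : ℝ)) ^ (a - q)
        = ((k : ℝ) + 1) ^ (a - q) * (k.factorial : ℝ) ^ (a - q) := by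
      rw [show (((k + 1).factorial : ℕ) : ℝ) = ((k : ℝ) + 1) * (k.factorial : ℝ) by
        push_cast [Nat.factorial_succ]; ring, Real.mul_rpow hk1.le (hfact k).le]
    have e2 : (((k : ℝ) + 2) / ((k : ℝ) + 1)) ^ a
        = ((k : ℝ) + 2) ^ a / ((k : ℝ) + 1) ^ a := Real.div_rpow (by positivity) hk1.le a
    have e3 : ((k : ℝ) + 1) ^ (a - q) = ((k : ℝ) + 1) ^ a / ((k : ℝ) + 1) ^ q :=
      Real.rpow_sub hk1 a q
    have hpa : (0 : ℝ) < ((k : ℝ) + 1) ^ a := Real.rpow_pos_of_pos hk1 a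
    have hpq : (0 : ℝ) < ((k : ℝ) + 1) ^ q := Real.rpow_pos_of_pos hk1 q
    simp only [hh, hφ]
    push_cast
    rw [e1, e2, e3]
    field_simp
    ring
  have hh0 : ∀ k, 0 ≤ h k := fun k => by
    have := hfact k
    rw [hh]; positivity
  have hψ : Tendsto (fun k : ℕ => (((k : ℝ) + 2) / ((k : ℝ) + 1)) ^ a) atTop (nhds 1) := by
    have h1 : Tendsto (fun k : ℕ => ((k : ℝ) + 2) / ((k : ℝ) + 1)) atTop (nhds 1) := by
      have h2 : (fun k : ℕ => ((k : ℝ) + 2) / ((k : ℝ) + 1))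
          = fun k : ℕ => 1 + 1 / ((k : ℝ) + 1) := by
        funext k
        have hk : ((k : ℝ) + 1) ≠ 0 := by positivity
        field_simp
        ring
      rw [h2]
      simpa using tendsto_const_nhds.add (tendsto_one_div_add_atTop_nhds_zero_nat (𝕜 := ℝ))
    have := h1.rpow_const (p := a) (Or.inl one_ne_zero)
    simpa using this
  obtain ⟨L, hL1, hφL⟩ : ∃ L, L < 1 ∧ Tendsto φ atTop (nhds L) := by
    rcases hcase with hlt | ⟨hqe, hT1⟩
    · refine ⟨0, one_pos, ?_⟩
      have hχ : Tendsto (fun k : ℕ => ((k : ℝ) + 1) ^ (a - q)) atTop (nhds 0) := by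
        have h0 := tendsto_rpow_neg_atTop (show 0 < q - a by linarith)
        have hcomp : Tendsto (fun k : ℕ => (k : ℝ) + 1) atTop atTop :=
          tendsto_atTop_add_const_right atTop 1 tendsto_natCast_atTop_atTop
        have h4 := h0.comp hcomp
        have h5 : (fun k : ℕ => ((k : ℝ) + 1) ^ (a - q))
            = (fun x : ℝ => x ^ (-(q - a))) ∘ (fun k : ℕ => (k : ℝ) + 1) := by
          funext k; simp [neg_sub]
        rw [h5]; exact h4
      have h6 : Tendsto φ atTop (nhds (r * 1 * 0)) :=
        (tendsto_const_nhds.mul hψ).mul hχ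
      simpa using h6
    · have hr1 : r < 1 := by
        rw [hr]; exact Real.rpow_lt_one hT hT1 (by linarith)
      refine ⟨r, hr1, ?_⟩
      have hχ : (fun k : ℕ => ((k : ℝ) + 1) ^ (a - q)) = fun _ : ℕ => (1 : ℝ) := by
        funext k; rw [hqe, sub_self, Real.rpow_zero]
      have h7 : Tendsto (fun k : ℕ => r * (((k : ℝ) + 2) / ((k : ℝ) + 1)) ^ a * (1 : ℝ))
          atTop (nhds (r * 1 * 1)) :=
        (tendsto_const_nhds.mul hψ).mul tendsto_const_nhds
      have h6 : Tendsto φ atTop (nhds (r * 1 * 1)) := by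
        apply h7.congr
        intro k
        simp only [hφ]
        rw [hqe, sub_self, Real.rpow_zero]
      simpa using h6
  have hLρ : L < (L + 1) / 2 := by linarith
  have hρ1 : (L + 1) / 2 < 1 := by linarith
  have hev : ∀ᶠ k in atTop, φ k ≤ (L + 1) / 2 := hφL.eventually_le_const hLρ
  apply summable_of_ratio_norm_eventually_le hρ1
  filter_upwards [hev] with k hk
  rw [Real.norm_of_nonneg (hh0 (k + 1)), Real.norm_of_nonneg (hh0 k), hstep k]
  exact mul_le_mul_of_nonneg_right hk (hh0 k)

private lemma main_ii (C : ℝ) (hC : 0 < C) (γseq : ℕ → ℝ) (Γ : ℕ → ℝ) (a Ca q : ℝ)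
    (hnn : ∀ j, 0 ≤ γseq j) (hΓnn : ∀ k, 0 ≤ Γ k) (ha : 0 < a) (hCa : 0 < Ca)
    (hΓ : ∀ k : ℕ, Γ k ≤ Ca * (k.factorial : ℝ) ^ a) (γ : Finset ℕ → ℝ)
    (hγ : ∀ u, γ u = Γ u.card * ∏ j ∈ u, γseq j)
    (hq1 : 1 ≤ q)
    (hsum : Summable (fun i : ℕ => (C ^ 2 * γseq i) ^ (1 / q)))
    (hcase : a < q ∨ (q = a ∧ (∑' i : ℕ, (C ^ 2 * γseq i) ^ (1 / q)) < 1)) :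
    ∃ c : ℝ, 0 < c ∧ ∀ j : ℕ,
      (∑ u ∈ (Finset.range (j + 1)).powerset.filter (fun u => j ∈ u),
        C ^ (2 * u.card) * γ u) ≤ c * γseq j := by
  classical
  have hq0 : (0 : ℝ) < q := by linarith
  set y : ℕ → ℝ := fun i => C ^ 2 * γseq i with hy_def
  have hy : ∀ i, 0 ≤ y i := fun i =>
    mul_nonneg (by positivity) (hnn i)
  set w : ℕ → ℝ := fun i => y i ^ (1 / q) with hw_def
  have hw : ∀ i, 0 ≤ w i := fun i => Real.rpow_nonneg (hy i) _
  have hwsum : Summable w := hsum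
  set T := ∑' i, w i with hT_def
  have hT0 : 0 ≤ T := tsum_nonneg fun i => hw i
  have hcase' : a < q ∨ (q = a ∧ T < 1) := hcase
  have hgsum := summable_g a q T Ca ha hCa hq1 hT0 hcase'
  set g : ℕ → ℝ := fun k => Ca * (((k + 1).factorial : ℝ)) ^ a
      * (T ^ k / (k.factorial : ℝ)) ^ q with hg_def
  have hfact : ∀ k : ℕ, (0 : ℝ) < (k.factorial : ℝ) := fun k => by
    exact_mod_cast k.factorial_pos
  have hg0 : ∀ k, 0 ≤ g k := fun k => by
    have := hfact k
    simp only [hg_def]; positivity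
  set c0 := ∑' k, g k with hc0_def
  have hc00 : 0 ≤ c0 := tsum_nonneg hg0
  refine ⟨C ^ 2 * c0 + 1, by positivity, ?_⟩
  intro j
  have hjj : j ∉ Finset.range j := by simp
  have himg : (Finset.range (j + 1)).powerset.filter (fun u => j ∈ u)
      = ((Finset.range j).powerset).image (insert j) := by
    ext u
    simp only [Finset.mem_filter, Finset.mem_powerset, Finset.mem_image]
    constructor
    · rintro ⟨hsub, hj⟩
      refine ⟨u.erase j, ?_, Finset.insert_erase hj⟩
      intro x hx
      have hx1 := Finset.mem_of_mem_erase hx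
      have hx2 := Finset.ne_of_mem_erase hx
      have := Finset.mem_range.1 (hsub hx1)
      exact Finset.mem_range.2 (by omega)
    · rintro ⟨v, hv, rfl⟩
      refine ⟨?_, Finset.mem_insert_self j v⟩
      apply Finset.insert_subset (Finset.mem_range.2 (by omega))
      exact hv.trans (Finset.range_subset_range.2 (by omega))
  have hinj : ∀ x ∈ (Finset.range j).powerset, ∀ z ∈ (Finset.range j).powerset,
      insert j x = insert j z → x = z := by
    intro x hx z hz hxz
    have hax : j ∉ x := fun h => hjj (Finset.mem_powerset.1 hx h)
    have haz : j ∉ z := fun h => hjj (Finset.mem_powerset.1 hz h)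
    rw [← Finset.erase_insert hax, ← Finset.erase_insert haz, hxz]
  rw [himg, Finset.sum_image hinj]
  have hterm : ∀ v ∈ (Finset.range j).powerset,
      C ^ (2 * (insert j v).card) * γ (insert j v)
        = C ^ 2 * γseq j * (Γ (v.card + 1) * ∏ i ∈ v, y i) := by
    intro v hv
    have hjv : j ∉ v := fun h => hjj (Finset.mem_powerset.1 hv h)
    rw [hγ, Finset.card_insert_of_notMem hjv, Finset.prod_insert hjv]
    have hprod : ∏ i ∈ v, y i = (C ^ 2) ^ v.card * ∏ i ∈ v, γseq i := by
      simp only [hy_def]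
      rw [Finset.prod_mul_distrib, Finset.prod_const]
    rw [hprod, pow_mul]
    ring
  rw [Finset.sum_congr rfl hterm, ← Finset.mul_sum]
  have hD : (∑ v ∈ (Finset.range j).powerset, Γ (v.card + 1) * ∏ i ∈ v, y i) ≤ c0 := by
    rw [Finset.sum_powerset, Finset.card_range]
    have hinner : ∀ k ∈ Finset.range (j + 1),
        (∑ v ∈ (Finset.range j).powersetCard k, Γ (v.card + 1) * ∏ i ∈ v, y i) ≤ g k := by
      intro k _
      have h1 : ∀ v ∈ (Finset.range j).powersetCard k,
          Γ (v.card + 1) * ∏ i ∈ v, y i = Γ (k + 1) * ∏ i ∈ v, y i := by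
        intro v hv
        rw [(Finset.mem_powersetCard.1 hv).2]
      rw [Finset.sum_congr rfl h1, ← Finset.mul_sum]
      set E := ∑ v ∈ (Finset.range j).powersetCard k, ∏ i ∈ v, y i with hE_def
      have hE0 : 0 ≤ E :=
        Finset.sum_nonneg fun v _ => Finset.prod_nonneg fun i _ => hy i
      have step2 : E ≤ (T ^ k / (k.factorial : ℝ)) ^ q := by
        have hterm2 : ∀ v ∈ (Finset.range j).powersetCard k,
            ∏ i ∈ v, y i = (∏ i ∈ v, w i) ^ q := by
          intro v _
          rw [hw_def]
          rw [Real.finset_prod_rpow v y (fun i _ => hy i) (1 / q),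
            ← Real.rpow_mul (Finset.prod_nonneg fun i _ => hy i), one_div,
            inv_mul_cancel₀ hq0.ne', Real.rpow_one]
        rw [hE_def, Finset.sum_congr rfl hterm2]
        have hEk : (∑ v ∈ (Finset.range j).powersetCard k, ∏ i ∈ v, w i)
            ≤ T ^ k / (k.factorial : ℝ) := by
          rw [le_div_iff₀ (hfact k)]
          have h5 := esymm_le w hw (Finset.range j) k
          have h6 : (∑ i ∈ Finset.range j, w i) ^ k ≤ T ^ k := by
            apply pow_le_pow_left₀ (Finset.sum_nonneg fun i _ => hw i)
            exact Summable.sum_le_tsum _ (fun i _ => hw i) hwsum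
          calc (∑ v ∈ (Finset.range j).powersetCard k, ∏ i ∈ v, w i) * (k.factorial : ℝ)
              = (k.factorial : ℝ) * ∑ v ∈ (Finset.range j).powersetCard k, ∏ i ∈ v, w i := by
                ring
            _ ≤ (∑ i ∈ Finset.range j, w i) ^ k := h5
            _ ≤ T ^ k := h6
        calc ∑ v ∈ (Finset.range j).powersetCard k, (∏ i ∈ v, w i) ^ q
            ≤ (∑ v ∈ (Finset.range j).powersetCard k, ∏ i ∈ v, w i) ^ q :=
              sum_rpow_le_rpow_sum _ _ (fun v => Finset.prod_nonneg fun i _ => hw i) hq1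
          _ ≤ (T ^ k / (k.factorial : ℝ)) ^ q := by
              apply Real.rpow_le_rpow
                (Finset.sum_nonneg fun v _ => Finset.prod_nonneg fun i _ => hw i) hEk hq0.le
      calc Γ (k + 1) * E ≤ (Ca * (((k + 1).factorial : ℝ)) ^ a) * E :=
            mul_le_mul_of_nonneg_right (hΓ (k + 1)) hE0
        _ ≤ (Ca * (((k + 1).factorial : ℝ)) ^ a) * ((T ^ k / (k.factorial : ℝ)) ^ q) := by
            apply mul_le_mul_of_nonneg_left step2 (by positivity)
        _ = g k := by rw [hg_def]
    calc (∑ k ∈ Finset.range (j + 1), ∑ v ∈ (Finset.range j).powersetCard k,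
          Γ (v.card + 1) * ∏ i ∈ v, y i)
        ≤ ∑ k ∈ Finset.range (j + 1), g k := Finset.sum_le_sum hinner
      _ ≤ c0 := Summable.sum_le_tsum _ (fun k _ => hg0 k) hgsum
  have hfin : C ^ 2 * γseq j * (∑ v ∈ (Finset.range j).powerset,
      Γ (v.card + 1) * ∏ i ∈ v, y i) ≤ C ^ 2 * γseq j * c0 :=
    mul_le_mul_of_nonneg_left hD (mul_nonneg (by positivity) (hnn j))
  have hlast : C ^ 2 * γseq j * c0 ≤ (C ^ 2 * c0 + 1) * γseq j := by
    nlinarith [hnn j]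
  linarith

theorem stmt16 (C : ℝ) (hC : 0 < C) (γseq : ℕ → ℝ) (Γ : ℕ → ℝ) (a Ca : ℝ)
    (hmono : Antitone γseq) (hnn : ∀ j, 0 ≤ γseq j) (hΓnn : ∀ k, 0 ≤ Γ k)
    (ha : 0 < a) (hCa : 0 < Ca) (hΓ : ∀ k : ℕ, Γ k ≤ Ca * (k.factorial : ℝ) ^ a)
    (γ : Finset ℕ → ℝ) (hγ : ∀ u, γ u = Γ u.card * ∏ j ∈ u, γseq j) :
    -- (i)
    (∀ j : ℕ,
      C ^ 2 * Γ 1 * γseq j ≤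
        ∑ u ∈ (Finset.range (j + 1)).powerset.filter (fun u => j ∈ u),
          C ^ (2 * u.card) * γ u) ∧
    -- (ii)
    (((ENNReal.ofReal a < decay γseq ∧ Summable γseq) ∨
      (decay γseq = ENNReal.ofReal a ∧ 1 ≤ a ∧
        (Summable fun j : ℕ => (C ^ 2 * γseq j) ^ (1 / a)) ∧
        (∑' j : ℕ, (C ^ 2 * γseq j) ^ (1 / a)) < 1)) →
      ∃ c : ℝ, 0 < c ∧ ∀ j : ℕ,
        (∑ u ∈ (Finset.range (j + 1)).powerset.filter (fun u => j ∈ u),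
          C ^ (2 * u.card) * γ u) ≤ c * γseq j) := by
  constructor
  · intro j
    have hmem : ({j} : Finset ℕ) ∈
        (Finset.range (j + 1)).powerset.filter (fun u => j ∈ u) := by
      simp [Finset.mem_filter, Finset.mem_powerset, Finset.singleton_subset_iff]
    have h0 : ∀ u ∈ (Finset.range (j + 1)).powerset.filter (fun u => j ∈ u),
        0 ≤ C ^ (2 * u.card) * γ u := by
      intro u _
      have : 0 ≤ γ u := by
        rw [hγ]
        exact mul_nonneg (hΓnn _) (Finset.prod_nonneg fun i _ => hnn i)
      positivity
    have h1 := Finset.single_le_sum h0 hmem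
    calc C ^ 2 * Γ 1 * γseq j
        = C ^ (2 * ({j} : Finset ℕ).card) * γ {j} := by
          rw [hγ]; simp; ring
      _ ≤ _ := h1
  · rintro (⟨hlt, hsγ⟩ | ⟨hdec, ha1, hsum2, htsum⟩)
    · rw [decay, lt_iSup_iff] at hlt
      obtain ⟨t, hlt⟩ := hlt
      rw [lt_iSup_iff] at hlt
      obtain ⟨⟨ht0, htsum⟩, hlt⟩ := hlt
      have hat : a < t := (ENNReal.ofReal_lt_ofReal_iff ht0).1 hlt
      by_cases h1t : 1 ≤ t
      · apply main_ii C hC γseq Γ a Ca t hnn hΓnn ha hCa hΓ γ hγ h1t ?_ (Or.inl hat)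
        have heq : (fun i : ℕ => (C ^ 2 * γseq i) ^ (1 / t))
            = fun i : ℕ => (C ^ 2) ^ (1 / t) * (γseq i) ^ (1 / t) := by
          funext i
          exact Real.mul_rpow (by positivity) (hnn i)
        rw [heq]
        exact htsum.mul_left _
      · push_neg at h1t
        apply main_ii C hC γseq Γ a Ca 1 hnn hΓnn ha hCa hΓ γ hγ le_rfl ?_
          (Or.inl (by linarith))
        have heq : (fun i : ℕ => (C ^ 2 * γseq i) ^ (1 / (1:ℝ)))
            = fun i : ℕ => C ^ 2 * γseq i := by
          funext i
          rw [div_one, Real.rpow_one]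
        rw [heq]
        exact hsγ.mul_left _
    · exact main_ii C hC γseq Γ a Ca a hnn hΓnn ha hCa hΓ γ hγ ha1 hsum2
        (Or.inr ⟨rfl, htsum⟩)
end
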